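/- arXiv:1403.7472 — 8 statements merged into one kernel-verified Lean document; each statement's English description precedes it below -/
import Mathlib

section
/- For positive definite n×n complex matrices A, B and any real y, Re Tr(A^{1/2+iy} B^{1/2+iy} A^{1/2-iy} B^{1/2-iy}) ≤ Tr(AB). -/
open Matrix Complex
open scoped ComplexOrder

/-- Real power of a (Hermitian, intended positive semidefinite) matrix via the spectral
decomposition; junk value `A` if `A` is not Hermitian. -/
noncomputable def Matrix.mpow {n : ℕ} (A : Matrix (Fin n) (Fin n) ℂ) (t : ℝ) :
    Matrix (Fin n) (Fin n) ℂ :=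
  if hA : A.IsHermitian then
    (hA.eigenvectorUnitary : Matrix (Fin n) (Fin n) ℂ) *
      Matrix.diagonal (fun i => ((hA.eigenvalues i ^ t : ℝ) : ℂ)) *
      (star (hA.eigenvectorUnitary : Matrix (Fin n) (Fin n) ℂ))
  else A

/-- Complex power `A ^ z = exp (z log A)` of a (Hermitian, intended positive definite) matrix via
the spectral decomposition; junk value `A` if `A` is not Hermitian. -/
noncomputable def Matrix.mcpow {n : ℕ} (A : Matrix (Fin n) (Fin n) ℂ) (z : ℂ) :
    Matrix (Fin n) (Fin n) ℂ :=
  if hA : A.IsHermitian then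
    (hA.eigenvectorUnitary : Matrix (Fin n) (Fin n) ℂ) *
      Matrix.diagonal (fun i => Complex.exp (z * Real.log (hA.eigenvalues i))) *
      (star (hA.eigenvectorUnitary : Matrix (Fin n) (Fin n) ℂ))
  else A

/-- Schatten `r`-norm of a matrix: `(∑ sᵢ(X)^r)^(1/r)`, where the `sᵢ(X)` are the singular
values, i.e. the square roots of the eigenvalues of `Xᴴ * X`. -/
noncomputable def Matrix.schatten {n : ℕ} (r : ℝ) (X : Matrix (Fin n) (Fin n) ℂ) : ℝ :=
  (∑ i, ((Matrix.posSemidef_conjTranspose_mul_self X).1.eigenvalues i) ^ (r / 2)) ^ (1 / r)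

/-- Frobenius (Hilbert–Schmidt) norm of a matrix. -/
noncomputable def Matrix.frob {n : ℕ} (X : Matrix (Fin n) (Fin n) ℂ) : ℝ :=
  Real.sqrt (Xᴴ * X).trace.re

/-- Operator (spectral) norm of a matrix. -/
noncomputable def Matrix.opNorm {n : ℕ} (X : Matrix (Fin n) (Fin n) ℂ) : ℝ :=
  ‖Matrix.toEuclideanCLM (𝕜 := ℂ) X‖

/-- Smallest singular value of a matrix. -/
noncomputable def Matrix.sMin {n : ℕ} (X : Matrix (Fin n) (Fin n) ℂ) : ℝ :=
  ⨅ i, Real.sqrt ((Matrix.posSemidef_conjTranspose_mul_self X).1.eigenvalues i)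

section Aux

variable {n : ℕ} {A : Matrix (Fin n) (Fin n) ℂ}

lemma mcpow_conjT (hA : A.IsHermitian) (z : ℂ) :
    (A.mcpow z)ᴴ = A.mcpow (starRingEnd ℂ z) := by
  rw [Matrix.mcpow, Matrix.mcpow, dif_pos hA, dif_pos hA]
  rw [conjTranspose_mul, conjTranspose_mul, diagonal_conjTranspose]
  simp only [star_eq_conjTranspose, conjTranspose_conjTranspose, Matrix.mul_assoc]
  have hd : (star fun i => Complex.exp (z * Real.log (hA.eigenvalues i)))
      = fun i => Complex.exp ((starRingEnd ℂ) z * Real.log (hA.eigenvalues i)) := by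
    funext i
    show (starRingEnd ℂ) (Complex.exp _) = _
    rw [← Complex.exp_conj, _root_.map_mul, Complex.conj_ofReal]
  rw [hd]

lemma mcpow_mul_mcpow (hA : A.IsHermitian) (z w : ℂ) :
    A.mcpow z * A.mcpow w = A.mcpow (z + w) := by
  rw [Matrix.mcpow, Matrix.mcpow, Matrix.mcpow, dif_pos hA, dif_pos hA, dif_pos hA]
  have hU : ∀ X : Matrix (Fin n) (Fin n) ℂ,
      (star (hA.eigenvectorUnitary : Matrix (Fin n) (Fin n) ℂ)) *
      ((hA.eigenvectorUnitary : Matrix (Fin n) (Fin n) ℂ) * X) = X := fun X => by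
    rw [← Matrix.mul_assoc, Unitary.coe_star_mul_self hA.eigenvectorUnitary, Matrix.one_mul]
  have hd : (fun i => Complex.exp (z * Real.log (hA.eigenvalues i)) *
      Complex.exp (w * Real.log (hA.eigenvalues i))) =
      (fun i => Complex.exp ((z + w) * Real.log (hA.eigenvalues i))) := by
    funext i
    rw [← Complex.exp_add]
    ring_nf
  simp only [Matrix.mul_assoc, hU]
  rw [← Matrix.mul_assoc (Matrix.diagonal _), diagonal_mul_diagonal, hd]

lemma mcpow_one (hA : A.PosDef) : A.mcpow 1 = A := by
  rw [Matrix.mcpow, dif_pos hA.1]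
  have : (fun i => Complex.exp (1 * Real.log (hA.1.eigenvalues i))) =
      (RCLike.ofReal ∘ hA.1.eigenvalues) := by
    funext i
    rw [one_mul, ← Complex.ofReal_exp, Real.exp_log (hA.eigenvalues_pos i)]
    rfl
  rw [this]
  have h := hA.1.spectral_theorem
  rw [Unitary.conjStarAlgAut_apply] at h
  exact h.symm

/-- The matrix `X` viewed as a vector in `ℂ^(n×n)` with the `L²` structure. -/
noncomputable def vv {n : ℕ} (X : Matrix (Fin n) (Fin n) ℂ) :
    EuclideanSpace ℂ (Fin n × Fin n) := WithLp.toLp 2 (fun p : Fin n × Fin n => X p.1 p.2)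

lemma inner_vv (X Y : Matrix (Fin n) (Fin n) ℂ) :
    (inner ℂ (vv X) (vv Y) : ℂ) = (Xᴴ * Y).trace := by
  simp only [PiLp.inner_apply, RCLike.inner_apply, vv, PiLp.toLp_apply, Matrix.trace, Matrix.diag,
    Matrix.mul_apply, Matrix.conjTranspose_apply, Fintype.sum_prod_type]
  rw [Finset.sum_comm]
  simp [RCLike.star_def, mul_comm]

lemma cs_trace (X Y : Matrix (Fin n) (Fin n) ℂ) :
    (Xᴴ * Y).trace.re ≤ Real.sqrt (Xᴴ * X).trace.re * Real.sqrt (Yᴴ * Y).trace.re := by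
  have h := re_inner_le_norm (𝕜 := ℂ) (vv X) (vv Y)
  rw [inner_vv] at h
  rwa [norm_eq_sqrt_re_inner (𝕜 := ℂ), norm_eq_sqrt_re_inner (𝕜 := ℂ), inner_vv, inner_vv] at h

lemma trace_re_nonneg (X : Matrix (Fin n) (Fin n) ℂ) :
    0 ≤ (Xᴴ * X).trace.re := by
  rw [← inner_vv]
  have := inner_self_eq_norm_sq (𝕜 := ℂ) (vv X)
  rw [RCLike.re_to_complex] at this
  rw [this]
  positivity

end Aux

theorem stmt1 {n : ℕ} {A B : Matrix (Fin n) (Fin n) ℂ}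
    (hA : A.PosDef) (hB : B.PosDef) (y : ℝ) :
    (A.mcpow (1 / 2 + (y : ℂ) * Complex.I) * B.mcpow (1 / 2 + (y : ℂ) * Complex.I) *
      A.mcpow (1 / 2 - (y : ℂ) * Complex.I) * B.mcpow (1 / 2 - (y : ℂ) * Complex.I)).trace.re ≤
      (A * B).trace.re := by
  set c : ℂ := 1 / 2 - (y : ℂ) * Complex.I with hc
  set c' : ℂ := 1 / 2 + (y : ℂ) * Complex.I with hc'
  have hcc : starRingEnd ℂ c = c' := by
    rw [hc, hc', map_sub, map_div₀, _root_.map_one, _root_.map_ofNat, _root_.map_mul, Complex.conj_I,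
      Complex.conj_ofReal]
    ring
  have hsum : c' + c = 1 := by rw [hc, hc']; ring
  have hsum' : c + c' = 1 := by rw [hc, hc']; ring
  set X : Matrix (Fin n) (Fin n) ℂ := B.mcpow c * A.mcpow c with hXdef
  set Y : Matrix (Fin n) (Fin n) ℂ := A.mcpow c * B.mcpow c with hYdef
  have hX : Xᴴ = A.mcpow c' * B.mcpow c' := by
    rw [hXdef, conjTranspose_mul, mcpow_conjT hA.1, mcpow_conjT hB.1, hcc]
  have hY : Yᴴ = B.mcpow c' * A.mcpow c' := by
    rw [hYdef, conjTranspose_mul, mcpow_conjT hA.1, mcpow_conjT hB.1, hcc]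
  have hXX : (Xᴴ * X).trace = (A * B).trace := by
    rw [hX, hXdef]
    have h1 : A.mcpow c' * B.mcpow c' * (B.mcpow c * A.mcpow c)
        = A.mcpow c' * (B * A.mcpow c) := by
      rw [Matrix.mul_assoc, ← Matrix.mul_assoc (B.mcpow c'), mcpow_mul_mcpow hB.1, hsum,
        mcpow_one hB]
    rw [h1, trace_mul_comm, Matrix.mul_assoc, mcpow_mul_mcpow hA.1, hsum', mcpow_one hA,
      trace_mul_comm]
  have hYY : (Yᴴ * Y).trace = (A * B).trace := by
    rw [hY, hYdef]
    have h1 : B.mcpow c' * A.mcpow c' * (A.mcpow c * B.mcpow c)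
        = B.mcpow c' * (A * B.mcpow c) := by
      rw [Matrix.mul_assoc, ← Matrix.mul_assoc (A.mcpow c'), mcpow_mul_mcpow hA.1, hsum,
        mcpow_one hA]
    rw [h1, trace_mul_comm, Matrix.mul_assoc, mcpow_mul_mcpow hB.1, hsum', mcpow_one hB]
  have hgoal : A.mcpow c' * B.mcpow c' * A.mcpow c * B.mcpow c = Xᴴ * Y := by
    rw [hX, hYdef]
    simp only [Matrix.mul_assoc]
  rw [hgoal]
  have h := cs_trace X Y
  rw [hXX, hYY] at h
  have hnn : 0 ≤ (A * B).trace.re := by rw [← hXX]; exact trace_re_nonneg X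
  calc (Xᴴ * Y).trace.re ≤ _ := h
    _ = (A * B).trace.re := Real.mul_self_sqrt hnn
end

section
/- For positive definite n×n complex matrices A, B and any complex z with 1/4 ≤ Re(z) ≤ 3/4, Re Tr(A^z B^z A^{1-z} B^{1-z}) ≤ Tr(AB). -/
open Matrix Complex
open scoped ComplexOrder

namespace AHO

variable {n : ℕ}

lemma mcpow_eq {A : Matrix (Fin n) (Fin n) ℂ} (hA : A.IsHermitian) (z : ℂ) :
    A.mcpow z = (hA.eigenvectorUnitary : Matrix (Fin n) (Fin n) ℂ) *
      Matrix.diagonal (fun i => Complex.exp (z * Real.log (hA.eigenvalues i))) *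
      (star (hA.eigenvectorUnitary : Matrix (Fin n) (Fin n) ℂ)) := by
  rw [Matrix.mcpow, dif_pos hA]

lemma conj_mul_sandwich (U D D' : Matrix (Fin n) (Fin n) ℂ) (h1 : star U * U = 1) :
    (U * D * star U) * (U * D' * star U) = U * (D * D') * star U := by
  have h2 : star U * (U * D' * star U) = D' * star U := by
    rw [← Matrix.mul_assoc, ← Matrix.mul_assoc, h1, Matrix.one_mul]
  rw [Matrix.mul_assoc (U * D) (star U) _, h2, ← Matrix.mul_assoc, Matrix.mul_assoc U D D']

lemma mcpow_add {A : Matrix (Fin n) (Fin n) ℂ} (hA : A.IsHermitian) (z w : ℂ) :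
    A.mcpow (z + w) = A.mcpow z * A.mcpow w := by
  rw [mcpow_eq hA, mcpow_eq hA, mcpow_eq hA,
    conj_mul_sandwich _ _ _ (Unitary.coe_star_mul_self hA.eigenvectorUnitary),
    Matrix.diagonal_mul_diagonal]
  have hf : (fun i => Complex.exp ((z + w) * Real.log (hA.eigenvalues i)))
      = fun i => Complex.exp (z * Real.log (hA.eigenvalues i)) *
          Complex.exp (w * Real.log (hA.eigenvalues i)) := by
    funext i
    rw [← Complex.exp_add, add_mul]
  rw [hf]

lemma mcpow_conjTranspose {A : Matrix (Fin n) (Fin n) ℂ} (hA : A.IsHermitian) (z : ℂ) :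
    (A.mcpow z)ᴴ = A.mcpow (starRingEnd ℂ z) := by
  rw [mcpow_eq hA, mcpow_eq hA, Matrix.conjTranspose_mul, Matrix.conjTranspose_mul,
    Matrix.diagonal_conjTranspose, Matrix.mul_assoc]
  rw [← Matrix.star_eq_conjTranspose, star_star, ← Matrix.star_eq_conjTranspose]
  rw [← Matrix.mul_assoc]
  have hf : (star fun i => Complex.exp (z * Real.log (hA.eigenvalues i)))
      = fun i => Complex.exp ((starRingEnd ℂ z) * Real.log (hA.eigenvalues i)) := by
    funext i
    simp only [Pi.star_apply, RCLike.star_def]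
    rw [← Complex.exp_conj, _root_.map_mul, Complex.conj_ofReal]
  rw [hf, Matrix.mul_assoc]

lemma mcpow_zero {A : Matrix (Fin n) (Fin n) ℂ} (hA : A.IsHermitian) :
    A.mcpow 0 = 1 := by
  rw [mcpow_eq hA]
  have hf : (fun i => Complex.exp (0 * Real.log (hA.eigenvalues i))) = fun _ : Fin n => (1 : ℂ) := by
    funext i
    rw [zero_mul, Complex.exp_zero]
  rw [hf, Matrix.diagonal_one, Matrix.mul_one]
  exact Unitary.coe_mul_star_self hA.eigenvectorUnitary

lemma mcpow_one {A : Matrix (Fin n) (Fin n) ℂ} (hA : A.PosDef) :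
    A.mcpow 1 = A := by
  rw [mcpow_eq hA.1]
  conv_rhs => rw [hA.1.spectral_theorem]
  have hf : (fun i => Complex.exp (1 * Real.log (hA.1.eigenvalues i)))
      = (RCLike.ofReal ∘ hA.1.eigenvalues : Fin n → ℂ) := by
    funext i
    simp only [Function.comp_apply, one_mul, ← Complex.ofReal_exp,
      Real.exp_log (hA.eigenvalues_pos i)]
    rfl
  rw [hf, Unitary.conjStarAlgAut_apply]

end AHO

namespace AHO

variable {n : ℕ}

noncomputable def emb (M : Matrix (Fin n) (Fin n) ℂ) : EuclideanSpace ℂ (Fin n × Fin n) :=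
  (WithLp.equiv 2 _).symm (fun p => M p.1 p.2)

lemma inner_emb (M N : Matrix (Fin n) (Fin n) ℂ) :
    (@inner ℂ _ _ (emb M) (emb N)) = (Mᴴ * N).trace := by
  simp only [emb, PiLp.inner_apply, RCLike.inner_apply, Matrix.trace, Matrix.diag,
    Matrix.mul_apply, Matrix.conjTranspose_apply, Fintype.sum_prod_type]
  rw [Finset.sum_comm]
  simp [RCLike.star_def, mul_comm]

lemma frob_eq_norm_emb (M : Matrix (Fin n) (Fin n) ℂ) : M.frob = ‖emb M‖ := by
  rw [Matrix.frob, ← inner_emb M M, @norm_eq_sqrt_re_inner ℂ _ _ _ _ (emb M)]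
  rfl

lemma frob_nonneg (M : Matrix (Fin n) (Fin n) ℂ) : 0 ≤ M.frob := by
  rw [frob_eq_norm_emb]; exact norm_nonneg _

lemma trace_re_nonneg (M : Matrix (Fin n) (Fin n) ℂ) : 0 ≤ (Mᴴ * M).trace.re := by
  rw [← inner_emb M M]
  exact @inner_self_nonneg ℂ _ _ _ _ (emb M)

lemma frob_sq (M : Matrix (Fin n) (Fin n) ℂ) : M.frob ^ 2 = (Mᴴ * M).trace.re := by
  rw [Matrix.frob, Real.sq_sqrt (trace_re_nonneg M)]

lemma trace_CS (X Y : Matrix (Fin n) (Fin n) ℂ) :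
    ‖(Xᴴ * Y).trace‖ ≤ X.frob * Y.frob := by
  rw [← inner_emb, frob_eq_norm_emb, frob_eq_norm_emb]
  exact @norm_inner_le_norm ℂ _ _ _ _ (emb X) (emb Y)

lemma frob_conjTranspose (X : Matrix (Fin n) (Fin n) ℂ) : Xᴴ.frob = X.frob := by
  rw [Matrix.frob, Matrix.frob, Matrix.conjTranspose_conjTranspose, Matrix.trace_mul_comm]

end AHO

namespace AHO

variable {n : ℕ} {A B : Matrix (Fin n) (Fin n) ℂ}

lemma mcpow_mul_mcpow (hA : A.IsHermitian) (z w : ℂ) :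
    A.mcpow z * A.mcpow w = A.mcpow (z + w) := (mcpow_add hA z w).symm

lemma mcpow_mul_mcpow_assoc (hA : A.IsHermitian) (z w : ℂ) (M : Matrix (Fin n) (Fin n) ℂ) :
    A.mcpow z * (A.mcpow w * M) = A.mcpow (z + w) * M := by
  rw [← Matrix.mul_assoc, mcpow_mul_mcpow hA]

lemma conj_half : (starRingEnd ℂ) (1/2 : ℂ) = 1/2 := by norm_num [Complex.ext_iff]

/-- trace of `X₂ᴴ X₂ = (P½Q½)ᴴ (P½Q½)` equals trace of `A*B`. -/
lemma traceG (hA : A.PosDef) (hB : B.PosDef) :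
    (((A.mcpow (1/2) * B.mcpow (1/2))ᴴ) * (A.mcpow (1/2) * B.mcpow (1/2))).trace
      = (A * B).trace := by
  rw [Matrix.conjTranspose_mul, mcpow_conjTranspose hA.1, mcpow_conjTranspose hB.1, conj_half]
  -- Tr(Q½ * (P½ * (P½ * Q½)))
  simp only [Matrix.mul_assoc]
  rw [Matrix.trace_mul_comm]
  simp only [Matrix.mul_assoc]
  rw [mcpow_mul_mcpow_assoc hA.1, mcpow_mul_mcpow hB.1]
  norm_num
  rw [mcpow_one hA, mcpow_one hB]

lemma trace_AB_re_nonneg (hA : A.PosDef) (hB : B.PosDef) : 0 ≤ (A * B).trace.re := by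
  rw [← traceG hA hB]
  exact trace_re_nonneg _

/-- `|Tr(G * G)| ≤ Tr(A*B).re` for `G = P½ Q½`. -/
lemma absTraceGG (hA : A.PosDef) (hB : B.PosDef) :
    ‖((A.mcpow (1/2) * B.mcpow (1/2)) * (A.mcpow (1/2) * B.mcpow (1/2))).trace‖
      ≤ (A * B).trace.re := by
  have h3 : (A.mcpow (1/2) * B.mcpow (1/2)).frob ^ 2 = (A*B).trace.re := by
    rw [frob_sq, traceG hA hB]
  calc ‖((A.mcpow (1/2) * B.mcpow (1/2)) * (A.mcpow (1/2) * B.mcpow (1/2))).trace‖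
      = ‖(((A.mcpow (1/2) * B.mcpow (1/2))ᴴ)ᴴ * (A.mcpow (1/2) * B.mcpow (1/2))).trace‖ := by
        rw [Matrix.conjTranspose_conjTranspose]
    _ ≤ ((A.mcpow (1/2) * B.mcpow (1/2))ᴴ).frob * (A.mcpow (1/2) * B.mcpow (1/2)).frob :=
        trace_CS _ _
    _ = (A*B).trace.re := by
        rw [frob_conjTranspose]
        nlinarith [frob_nonneg (A.mcpow (1/2) * B.mcpow (1/2))]

end AHO

namespace AHO

variable {n : ℕ} {A B : Matrix (Fin n) (Fin n) ℂ}

lemma half_line (hA : A.PosDef) (hB : B.PosDef) {z : ℂ} (hz : z.re = 1/2) :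
    ‖(A.mcpow z * B.mcpow z * A.mcpow (1-z) * B.mcpow (1-z)).trace‖
      ≤ (A * B).trace.re := by
  have hzz : z + (starRingEnd ℂ) z = 1 := by
    rw [Complex.add_conj, hz]; norm_num
  have hzz' : (starRingEnd ℂ) z + z = 1 := by rw [add_comm]; exact hzz
  have hww : (1 - (starRingEnd ℂ) z) + (1 - z) = 1 := by linear_combination -hzz'
  have hww' : (1 - z) + (1 - (starRingEnd ℂ) z) = 1 := by linear_combination -hzz
  have hconj1z : (starRingEnd ℂ) (1 - z) = 1 - (starRingEnd ℂ) z := by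
    rw [map_sub]; simp
  have hc0 : 0 ≤ (A * B).trace.re := trace_AB_re_nonneg hA hB
  -- X = Q z̄ * P z̄,  Y = P (1-z) * Q (1-z)
  have hXH : (B.mcpow ((starRingEnd ℂ) z) * A.mcpow ((starRingEnd ℂ) z))ᴴ
      = A.mcpow z * B.mcpow z := by
    rw [Matrix.conjTranspose_mul, mcpow_conjTranspose hA.1, mcpow_conjTranspose hB.1,
      Complex.conj_conj]
  have htr : (A.mcpow z * B.mcpow z * A.mcpow (1-z) * B.mcpow (1-z)).trace
      = ((B.mcpow ((starRingEnd ℂ) z) * A.mcpow ((starRingEnd ℂ) z))ᴴ *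
          (A.mcpow (1-z) * B.mcpow (1-z))).trace := by
    rw [hXH, Matrix.mul_assoc]
  have hfX : (B.mcpow ((starRingEnd ℂ) z) * A.mcpow ((starRingEnd ℂ) z)).frob ^ 2
      = (A * B).trace.re := by
    rw [frob_sq, hXH]
    -- Tr(Pz * (Qz * (Qz̄ * Pz̄)))
    simp only [Matrix.mul_assoc]
    rw [Matrix.trace_mul_comm]
    simp only [Matrix.mul_assoc]
    rw [mcpow_mul_mcpow_assoc hB.1, hzz, mcpow_one hB]
    rw [Matrix.trace_mul_comm]
    simp only [Matrix.mul_assoc]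
    rw [mcpow_mul_mcpow_assoc hA.1, hzz', mcpow_one hA]
  have hfY : (A.mcpow (1-z) * B.mcpow (1-z)).frob ^ 2 = (A * B).trace.re := by
    rw [frob_sq, Matrix.conjTranspose_mul, mcpow_conjTranspose hA.1, mcpow_conjTranspose hB.1,
      hconj1z]
    -- Tr((Q(1-z̄) * P(1-z̄)) * (P(1-z) * Q(1-z)))
    simp only [Matrix.mul_assoc]
    rw [Matrix.trace_mul_comm]
    simp only [Matrix.mul_assoc]
    rw [mcpow_mul_mcpow_assoc hA.1, hww, mcpow_one hA]
    rw [Matrix.trace_mul_comm]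
    simp only [Matrix.mul_assoc]
    rw [mcpow_mul_mcpow_assoc hB.1]
    rw [show (1 - z) + (1 - (starRingEnd ℂ) z) = 1 from hww', mcpow_one hB]
    rw [Matrix.trace_mul_comm]
  calc ‖(A.mcpow z * B.mcpow z * A.mcpow (1-z) * B.mcpow (1-z)).trace‖
      = ‖((B.mcpow ((starRingEnd ℂ) z) * A.mcpow ((starRingEnd ℂ) z))ᴴ *
          (A.mcpow (1-z) * B.mcpow (1-z))).trace‖ := by rw [htr]
    _ ≤ (B.mcpow ((starRingEnd ℂ) z) * A.mcpow ((starRingEnd ℂ) z)).frob *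
          (A.mcpow (1-z) * B.mcpow (1-z)).frob := trace_CS _ _
    _ ≤ (A * B).trace.re := by nlinarith [frob_nonneg (B.mcpow ((starRingEnd ℂ) z) *
          A.mcpow ((starRingEnd ℂ) z)), frob_nonneg (A.mcpow (1-z) * B.mcpow (1-z))]

end AHO

namespace AHO

variable {n : ℕ} {A B : Matrix (Fin n) (Fin n) ℂ}

lemma quarter_line (hA : A.PosDef) (hB : B.PosDef) {z : ℂ} (hz : z.re = 1/4) :
    ‖(A.mcpow z * B.mcpow z * A.mcpow (1-z) * B.mcpow (1-z)).trace‖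
      ≤ (A * B).trace.re := by
  have hc0 : 0 ≤ (A * B).trace.re := trace_AB_re_nonneg hA hB
  have hzz : z + (starRingEnd ℂ) z = 1/2 := by
    rw [Complex.add_conj, hz]; push_cast; norm_num
  have hzz' : (starRingEnd ℂ) z + z = 1/2 := by rw [add_comm]; exact hzz
  have he1 : (starRingEnd ℂ) z + 1/2 = 1 - z := by linear_combination hzz
  have he2 : (1:ℂ)/2 + (starRingEnd ℂ) z = 1 - z := by linear_combination hzz
  have hX3H : (B.mcpow ((starRingEnd ℂ) z) * A.mcpow z)ᴴ
      = A.mcpow ((starRingEnd ℂ) z) * B.mcpow z := by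
    rw [Matrix.conjTranspose_mul, mcpow_conjTranspose hA.1, mcpow_conjTranspose hB.1,
      Complex.conj_conj]
  have hX1H : (B.mcpow z * A.mcpow ((starRingEnd ℂ) z))ᴴ
      = A.mcpow z * B.mcpow ((starRingEnd ℂ) z) := by
    rw [Matrix.conjTranspose_mul, mcpow_conjTranspose hA.1, mcpow_conjTranspose hB.1,
      Complex.conj_conj]
  -- step A : trace rearrangement
  have hF : (A.mcpow z * B.mcpow z * A.mcpow (1-z) * B.mcpow (1-z)).trace
      = ((A.mcpow (1/2) * B.mcpow (1/2)) *
          ((B.mcpow ((starRingEnd ℂ) z) * A.mcpow z) *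
            (B.mcpow z * A.mcpow ((starRingEnd ℂ) z)))).trace := by
    have hL : (A.mcpow z * B.mcpow z * A.mcpow (1-z) * B.mcpow (1-z)).trace
        = (B.mcpow z * (A.mcpow (1-z) * (B.mcpow (1-z) * A.mcpow z))).trace := by
      simp only [Matrix.mul_assoc]
      rw [Matrix.trace_mul_comm]
      simp only [Matrix.mul_assoc]
    have hR : ((A.mcpow (1/2) * B.mcpow (1/2)) *
          ((B.mcpow ((starRingEnd ℂ) z) * A.mcpow z) *
            (B.mcpow z * A.mcpow ((starRingEnd ℂ) z)))).trace
        = (B.mcpow z * (A.mcpow (1-z) * (B.mcpow (1-z) * A.mcpow z))).trace := by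
      rw [Matrix.trace_mul_comm]
      simp only [Matrix.mul_assoc]
      rw [Matrix.trace_mul_comm]
      simp only [Matrix.mul_assoc]
      rw [Matrix.trace_mul_comm]
      simp only [Matrix.mul_assoc]
      rw [mcpow_mul_mcpow_assoc hA.1, he1, mcpow_mul_mcpow_assoc hB.1, he2]
    rw [hL, hR]
  -- step C : M*M and N*N traces
  have hMM : (((B.mcpow ((starRingEnd ℂ) z) * A.mcpow z)ᴴ *
        (B.mcpow ((starRingEnd ℂ) z) * A.mcpow z))ᴴ *
          ((B.mcpow ((starRingEnd ℂ) z) * A.mcpow z)ᴴ *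
            (B.mcpow ((starRingEnd ℂ) z) * A.mcpow z))).trace
      = ((A.mcpow (1/2) * B.mcpow (1/2)) * (A.mcpow (1/2) * B.mcpow (1/2))).trace := by
    rw [(Matrix.isHermitian_conjTranspose_mul_self _).eq, hX3H]
    simp only [Matrix.mul_assoc]
    rw [mcpow_mul_mcpow_assoc hB.1, hzz]
    rw [mcpow_mul_mcpow_assoc hA.1, hzz]
    rw [mcpow_mul_mcpow_assoc hB.1, hzz]
    rw [Matrix.trace_mul_comm]
    simp only [Matrix.mul_assoc]
    rw [mcpow_mul_mcpow hA.1, hzz]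
    rw [Matrix.trace_mul_comm]
    simp only [Matrix.mul_assoc]
  have hNN : (((B.mcpow z * A.mcpow ((starRingEnd ℂ) z)) *
        (B.mcpow z * A.mcpow ((starRingEnd ℂ) z))ᴴ)ᴴ *
          ((B.mcpow z * A.mcpow ((starRingEnd ℂ) z)) *
            (B.mcpow z * A.mcpow ((starRingEnd ℂ) z))ᴴ)).trace
      = ((A.mcpow (1/2) * B.mcpow (1/2)) * (A.mcpow (1/2) * B.mcpow (1/2))).trace := by
    rw [(Matrix.isHermitian_mul_conjTranspose_self _).eq, hX1H]
    simp only [Matrix.mul_assoc]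
    rw [mcpow_mul_mcpow_assoc hA.1, hzz']
    rw [mcpow_mul_mcpow_assoc hB.1, hzz']
    rw [mcpow_mul_mcpow_assoc hA.1, hzz']
    rw [Matrix.trace_mul_comm]
    simp only [Matrix.mul_assoc]
    rw [mcpow_mul_mcpow hB.1, hzz']
  -- step D : frobenius bounds
  have hfX2 : (A.mcpow (1/2) * B.mcpow (1/2)).frob = Real.sqrt ((A * B).trace.re) := by
    have := frob_sq (A.mcpow (1/2) * B.mcpow (1/2))
    rw [traceG hA hB] at this
    rw [← Real.sqrt_sq (frob_nonneg (A.mcpow (1/2) * B.mcpow (1/2))), this]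
  have hfM : ((B.mcpow ((starRingEnd ℂ) z) * A.mcpow z)ᴴ *
      (B.mcpow ((starRingEnd ℂ) z) * A.mcpow z)).frob ≤ Real.sqrt ((A * B).trace.re) := by
    set M := (B.mcpow ((starRingEnd ℂ) z) * A.mcpow z)ᴴ *
      (B.mcpow ((starRingEnd ℂ) z) * A.mcpow z) with hMdef
    have h1 : M.frob ^ 2 ≤ (A * B).trace.re := by
      rw [frob_sq, hMM]
      exact le_trans (Complex.re_le_norm _) (absTraceGG hA hB)
    rw [← Real.sqrt_sq (frob_nonneg M)]
    exact Real.sqrt_le_sqrt h1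
  have hfN : ((B.mcpow z * A.mcpow ((starRingEnd ℂ) z)) *
      (B.mcpow z * A.mcpow ((starRingEnd ℂ) z))ᴴ).frob ≤ Real.sqrt ((A * B).trace.re) := by
    set N := (B.mcpow z * A.mcpow ((starRingEnd ℂ) z)) *
      (B.mcpow z * A.mcpow ((starRingEnd ℂ) z))ᴴ with hNdef
    have h1 : N.frob ^ 2 ≤ (A * B).trace.re := by
      rw [frob_sq, hNN]
      exact le_trans (Complex.re_le_norm _) (absTraceGG hA hB)
    rw [← Real.sqrt_sq (frob_nonneg N)]
    exact Real.sqrt_le_sqrt h1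
  -- step E : the product X3 * X1
  have htr31 : (((B.mcpow ((starRingEnd ℂ) z) * A.mcpow z) *
        (B.mcpow z * A.mcpow ((starRingEnd ℂ) z)))ᴴ *
      ((B.mcpow ((starRingEnd ℂ) z) * A.mcpow z) *
        (B.mcpow z * A.mcpow ((starRingEnd ℂ) z)))).trace
      = (((B.mcpow ((starRingEnd ℂ) z) * A.mcpow z)ᴴ *
            (B.mcpow ((starRingEnd ℂ) z) * A.mcpow z))ᴴ *
          ((B.mcpow z * A.mcpow ((starRingEnd ℂ) z)) *
            (B.mcpow z * A.mcpow ((starRingEnd ℂ) z))ᴴ)).trace := by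
    rw [Matrix.conjTranspose_mul ((B.mcpow ((starRingEnd ℂ) z) * A.mcpow z))
        ((B.mcpow z * A.mcpow ((starRingEnd ℂ) z))),
      (Matrix.isHermitian_conjTranspose_mul_self _).eq]
    rw [hX3H, hX1H]
    simp only [Matrix.mul_assoc]
    rw [Matrix.trace_mul_comm]
    simp only [Matrix.mul_assoc]
    rw [Matrix.trace_mul_comm]
    simp only [Matrix.mul_assoc]
  have hf31 : ((B.mcpow ((starRingEnd ℂ) z) * A.mcpow z) *
      (B.mcpow z * A.mcpow ((starRingEnd ℂ) z))).frob ≤ Real.sqrt ((A * B).trace.re) := by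
    rw [← Real.sqrt_sq (frob_nonneg _)]
    apply Real.sqrt_le_sqrt
    rw [frob_sq]
    calc (((((B.mcpow ((starRingEnd ℂ) z) * A.mcpow z) *
        (B.mcpow z * A.mcpow ((starRingEnd ℂ) z))))ᴴ *
      ((B.mcpow ((starRingEnd ℂ) z) * A.mcpow z) *
        (B.mcpow z * A.mcpow ((starRingEnd ℂ) z)))).trace).re
        ≤ ‖(((B.mcpow ((starRingEnd ℂ) z) * A.mcpow z)ᴴ *
            (B.mcpow ((starRingEnd ℂ) z) * A.mcpow z))ᴴ *
          ((B.mcpow z * A.mcpow ((starRingEnd ℂ) z)) *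
            (B.mcpow z * A.mcpow ((starRingEnd ℂ) z))ᴴ)).trace‖ := by
          rw [← htr31]; exact Complex.re_le_norm _
      _ ≤ ((B.mcpow ((starRingEnd ℂ) z) * A.mcpow z)ᴴ *
            (B.mcpow ((starRingEnd ℂ) z) * A.mcpow z)).frob *
          ((B.mcpow z * A.mcpow ((starRingEnd ℂ) z)) *
            (B.mcpow z * A.mcpow ((starRingEnd ℂ) z))ᴴ).frob := trace_CS _ _
      _ ≤ Real.sqrt ((A * B).trace.re) * Real.sqrt ((A * B).trace.re) := by
          apply mul_le_mul hfM hfN (frob_nonneg _) (Real.sqrt_nonneg _)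
      _ = (A * B).trace.re := Real.mul_self_sqrt hc0
  -- final assembly
  calc ‖(A.mcpow z * B.mcpow z * A.mcpow (1-z) * B.mcpow (1-z)).trace‖
      = ‖(((A.mcpow (1/2) * B.mcpow (1/2))ᴴ)ᴴ *
          ((B.mcpow ((starRingEnd ℂ) z) * A.mcpow z) *
            (B.mcpow z * A.mcpow ((starRingEnd ℂ) z)))).trace‖ := by
        rw [hF, Matrix.conjTranspose_conjTranspose]
    _ ≤ ((A.mcpow (1/2) * B.mcpow (1/2))ᴴ).frob *
          ((B.mcpow ((starRingEnd ℂ) z) * A.mcpow z) *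
            (B.mcpow z * A.mcpow ((starRingEnd ℂ) z))).frob := trace_CS _ _
    _ ≤ Real.sqrt ((A * B).trace.re) * Real.sqrt ((A * B).trace.re) := by
        rw [frob_conjTranspose, hfX2]
        exact mul_le_mul_of_nonneg_left hf31 (Real.sqrt_nonneg _)
    _ = (A * B).trace.re := Real.mul_self_sqrt hc0

end AHO

namespace AHO

variable {n : ℕ} {A B : Matrix (Fin n) (Fin n) ℂ}

lemma mcpow_apply (hA : A.IsHermitian) (z : ℂ) (i j : Fin n) :
    A.mcpow z i j = ∑ p, (hA.eigenvectorUnitary : Matrix (Fin n) (Fin n) ℂ) i p *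
      Complex.exp (z * Real.log (hA.eigenvalues p)) *
      (starRingEnd ℂ) ((hA.eigenvectorUnitary : Matrix (Fin n) (Fin n) ℂ) j p) := by
  rw [mcpow_eq hA]
  simp [Matrix.mul_apply, Matrix.diagonal_apply, Matrix.star_apply, RCLike.star_def,
    mul_ite, mul_zero, ite_mul, zero_mul, Finset.sum_ite_eq, Finset.sum_ite_eq']

lemma mcpow_entry_differentiable (hA : A.IsHermitian) (i j : Fin n) :
    Differentiable ℂ (fun z => A.mcpow z i j) := by
  have h : (fun z => A.mcpow z i j) = fun z =>
      ∑ p, (hA.eigenvectorUnitary : Matrix (Fin n) (Fin n) ℂ) i p *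
        Complex.exp (z * Real.log (hA.eigenvalues p)) *
        (starRingEnd ℂ) ((hA.eigenvectorUnitary : Matrix (Fin n) (Fin n) ℂ) j p) :=
    funext fun z => mcpow_apply hA z i j
  rw [h]
  apply Differentiable.fun_sum
  intro p _
  exact (((differentiable_id.mul_const _).cexp).const_mul _).mul_const _

lemma trace_mcpow (hA : A.IsHermitian) (z : ℂ) :
    (A.mcpow z).trace = ∑ i, Complex.exp (z * Real.log (hA.eigenvalues i)) := by
  rw [mcpow_eq hA, Matrix.trace_mul_comm, ← Matrix.mul_assoc,
    Unitary.coe_star_mul_self hA.eigenvectorUnitary, Matrix.one_mul, Matrix.trace_diagonal]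

/-- Bound on `frob (A.mcpow z) ^ 2` uniform over `0 ≤ re z ≤ 1`. -/
lemma frob_mcpow_sq_le (hA : A.PosDef) {z : ℂ} (h0 : 0 ≤ z.re) (h1 : z.re ≤ 1) :
    (A.mcpow z).frob ^ 2 ≤ ∑ i, Real.exp (2 * |Real.log (hA.1.eigenvalues i)|) := by
  rw [frob_sq, mcpow_conjTranspose hA.1, mcpow_mul_mcpow hA.1, trace_mcpow hA.1, Complex.re_sum]
  apply Finset.sum_le_sum
  intro i _
  have hre : (((starRingEnd ℂ) z + z) * (Real.log (hA.1.eigenvalues i) : ℂ)).re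
      = (2 * z.re) * Real.log (hA.1.eigenvalues i) := by
    rw [Complex.mul_re, Complex.ofReal_re, Complex.ofReal_im, mul_zero, sub_zero,
      Complex.add_re, Complex.conj_re]
    ring
  calc (Complex.exp (((starRingEnd ℂ) z + z) * (Real.log (hA.1.eigenvalues i) : ℂ))).re
      ≤ ‖Complex.exp (((starRingEnd ℂ) z + z) * (Real.log (hA.1.eigenvalues i) : ℂ))‖ :=
        Complex.re_le_norm _
    _ = Real.exp ((2 * z.re) * Real.log (hA.1.eigenvalues i)) := by
        rw [Complex.norm_exp, hre]
    _ ≤ Real.exp (2 * |Real.log (hA.1.eigenvalues i)|) := by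
        apply Real.exp_le_exp.2
        rcases abs_cases (Real.log (hA.1.eigenvalues i)) with ⟨h, hp⟩ | ⟨h, hp⟩ <;> nlinarith

lemma frob_sq_eq_sum (M : Matrix (Fin n) (Fin n) ℂ) :
    M.frob ^ 2 = ∑ j, ∑ i, ‖M i j‖ ^ 2 := by
  rw [frob_sq]
  simp only [Matrix.trace, Matrix.diag_apply, Matrix.mul_apply, Matrix.conjTranspose_apply,
    Complex.re_sum]
  apply Finset.sum_congr rfl
  intro j _
  apply Finset.sum_congr rfl
  intro i _
  rw [RCLike.star_def, mul_comm, Complex.mul_conj, Complex.ofReal_re, ← Complex.sq_norm]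

lemma frob_submul (M N : Matrix (Fin n) (Fin n) ℂ) : (M * N).frob ≤ M.frob * N.frob := by
  have hsq : (M * N).frob ^ 2 ≤ (M.frob * N.frob) ^ 2 := by
    rw [mul_pow, frob_sq_eq_sum, frob_sq_eq_sum, frob_sq_eq_sum]
    have hentry : ∀ i j, ‖(M * N) i j‖ ^ 2 ≤
        (∑ k, ‖M i k‖ ^ 2) * (∑ k, ‖N k j‖ ^ 2) := by
      intro i j
      have hx : ‖(M * N) i j‖ ≤
          Real.sqrt (∑ k, ‖M i k‖ ^ 2) * Real.sqrt (∑ k, ‖N k j‖ ^ 2) := by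
        let x : EuclideanSpace ℂ (Fin n) := (WithLp.equiv 2 _).symm (fun k => (starRingEnd ℂ) (M i k))
        let y : EuclideanSpace ℂ (Fin n) := (WithLp.equiv 2 _).symm (fun k => N k j)
        have hxy : (@inner ℂ _ _ x y) = (M * N) i j := by
          simp [x, y, PiLp.inner_apply, RCLike.inner_apply, Matrix.mul_apply,
            RCLike.star_def, mul_comm]
        have hnx : ‖x‖ = Real.sqrt (∑ k, ‖M i k‖ ^ 2) := by
          simp [x, EuclideanSpace.norm_eq,
            Complex.norm_conj]
        have hny : ‖y‖ = Real.sqrt (∑ k, ‖N k j‖ ^ 2) := by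
          simp [y, EuclideanSpace.norm_eq]
        calc ‖(M * N) i j‖ = ‖(@inner ℂ _ _ x y)‖ := by rw [hxy]
          _ ≤ ‖x‖ * ‖y‖ := @norm_inner_le_norm ℂ _ _ _ _ x y
          _ = _ := by rw [hnx, hny]
      have h2 := mul_le_mul hx hx (norm_nonneg _)
        (by positivity)
      calc ‖(M * N) i j‖ ^ 2 = ‖(M * N) i j‖ * ‖(M * N) i j‖ :=
            pow_two _
        _ ≤ (Real.sqrt (∑ k, ‖M i k‖ ^ 2) * Real.sqrt (∑ k, ‖N k j‖ ^ 2)) *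
            (Real.sqrt (∑ k, ‖M i k‖ ^ 2) * Real.sqrt (∑ k, ‖N k j‖ ^ 2)) := h2
        _ = (∑ k, ‖M i k‖ ^ 2) * (∑ k, ‖N k j‖ ^ 2) := by
            rw [show ∀ a b : ℝ, a * b * (a * b) = (a * a) * (b * b) from fun a b => by ring,
              Real.mul_self_sqrt (Finset.sum_nonneg fun k _ => sq_nonneg _),
              Real.mul_self_sqrt (Finset.sum_nonneg fun k _ => sq_nonneg _)]
    calc ∑ j, ∑ i, ‖(M * N) i j‖ ^ 2
        ≤ ∑ j, ∑ i, (∑ k, ‖M i k‖ ^ 2) * (∑ k, ‖N k j‖ ^ 2) :=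
          Finset.sum_le_sum fun j _ => Finset.sum_le_sum fun i _ => hentry i j
      _ = ∑ j, ((∑ i, ∑ k, ‖M i k‖ ^ 2) * (∑ k, ‖N k j‖ ^ 2)) := by
          apply Finset.sum_congr rfl
          intro j _
          rw [Finset.sum_mul]
      _ = (∑ i, ∑ k, ‖M i k‖ ^ 2) * (∑ j, ∑ k, ‖N k j‖ ^ 2) := by
          rw [Finset.mul_sum]
      _ = (∑ j, ∑ i, ‖M i j‖ ^ 2) * (∑ j, ∑ i, ‖N i j‖ ^ 2) := by
          congr 1
          exact Finset.sum_comm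
  have h1 := Real.sqrt_le_sqrt hsq
  rwa [Real.sqrt_sq (frob_nonneg _),
    Real.sqrt_sq (mul_nonneg (frob_nonneg M) (frob_nonneg N))] at h1

end AHO

namespace AHO

variable {n : ℕ} {A B : Matrix (Fin n) (Fin n) ℂ}

lemma F_differentiable (hA : A.PosDef) (hB : B.PosDef) :
    Differentiable ℂ
      (fun z => (A.mcpow z * B.mcpow z * A.mcpow (1-z) * B.mcpow (1-z)).trace) := by
  have h1 : ∀ i j, Differentiable ℂ (fun z => A.mcpow z i j) := mcpow_entry_differentiable hA.1
  have h2 : ∀ i j, Differentiable ℂ (fun z => B.mcpow z i j) := mcpow_entry_differentiable hB.1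
  have hsub : Differentiable ℂ (fun z : ℂ => 1 - z) :=
    (differentiable_const (1:ℂ)).sub differentiable_id
  have h3 : ∀ i j, Differentiable ℂ (fun z => A.mcpow (1-z) i j) := fun i j =>
    (mcpow_entry_differentiable hA.1 i j).comp hsub
  have h4 : ∀ i j, Differentiable ℂ (fun z => B.mcpow (1-z) i j) := fun i j =>
    (mcpow_entry_differentiable hB.1 i j).comp hsub
  have h12 : ∀ i j, Differentiable ℂ (fun z => (A.mcpow z * B.mcpow z) i j) := by
    intro i j
    have e : (fun z => (A.mcpow z * B.mcpow z) i j)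
        = fun z => ∑ k, A.mcpow z i k * B.mcpow z k j :=
      funext fun z => Matrix.mul_apply
    rw [e]; exact Differentiable.fun_sum fun k _ => (h1 i k).mul (h2 k j)
  have h123 : ∀ i j, Differentiable ℂ (fun z => (A.mcpow z * B.mcpow z * A.mcpow (1-z)) i j) := by
    intro i j
    have e : (fun z => (A.mcpow z * B.mcpow z * A.mcpow (1-z)) i j)
        = fun z => ∑ k, (A.mcpow z * B.mcpow z) i k * A.mcpow (1-z) k j :=
      funext fun z => Matrix.mul_apply
    rw [e]; exact Differentiable.fun_sum fun k _ => (h12 i k).mul (h3 k j)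
  have h1234 : ∀ i j, Differentiable ℂ
      (fun z => (A.mcpow z * B.mcpow z * A.mcpow (1-z) * B.mcpow (1-z)) i j) := by
    intro i j
    have e : (fun z => (A.mcpow z * B.mcpow z * A.mcpow (1-z) * B.mcpow (1-z)) i j)
        = fun z => ∑ k, (A.mcpow z * B.mcpow z * A.mcpow (1-z)) i k * B.mcpow (1-z) k j :=
      funext fun z => Matrix.mul_apply
    rw [e]; exact Differentiable.fun_sum fun k _ => (h123 i k).mul (h4 k j)
  have e : (fun z => (A.mcpow z * B.mcpow z * A.mcpow (1-z) * B.mcpow (1-z)).trace)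
      = fun z => ∑ i, (A.mcpow z * B.mcpow z * A.mcpow (1-z) * B.mcpow (1-z)) i i :=
    funext fun z => rfl
  rw [e]
  exact Differentiable.fun_sum fun i _ => h1234 i i

lemma frob_mcpow_le (hA : A.PosDef) {z : ℂ} (h0 : 0 ≤ z.re) (h1 : z.re ≤ 1) :
    (A.mcpow z).frob ≤ Real.sqrt (∑ i, Real.exp (2 * |Real.log (hA.1.eigenvalues i)|)) := by
  rw [← Real.sqrt_sq (frob_nonneg _)]
  exact Real.sqrt_le_sqrt (frob_mcpow_sq_le hA h0 h1)

lemma abs_trace4_le (M1 M2 M3 M4 : Matrix (Fin n) (Fin n) ℂ) :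
    ‖(M1 * M2 * M3 * M4).trace‖ ≤ (M1 * M2).frob * (M3 * M4).frob := by
  have h : (M1 * M2 * M3 * M4).trace = (((M1 * M2)ᴴ)ᴴ * (M3 * M4)).trace := by
    rw [Matrix.conjTranspose_conjTranspose, Matrix.mul_assoc]
  rw [h]
  calc ‖(((M1 * M2)ᴴ)ᴴ * (M3 * M4)).trace‖
      ≤ ((M1 * M2)ᴴ).frob * (M3 * M4).frob := trace_CS _ _
    _ = (M1 * M2).frob * (M3 * M4).frob := by rw [frob_conjTranspose]

lemma F_strip_bound (hA : A.PosDef) (hB : B.PosDef) {z : ℂ}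
    (h0 : 0 ≤ z.re) (h1 : z.re ≤ 1) :
    ‖(A.mcpow z * B.mcpow z * A.mcpow (1-z) * B.mcpow (1-z)).trace‖
      ≤ (Real.sqrt (∑ i, Real.exp (2 * |Real.log (hA.1.eigenvalues i)|)) *
          Real.sqrt (∑ i, Real.exp (2 * |Real.log (hB.1.eigenvalues i)|))) *
        (Real.sqrt (∑ i, Real.exp (2 * |Real.log (hA.1.eigenvalues i)|)) *
          Real.sqrt (∑ i, Real.exp (2 * |Real.log (hB.1.eigenvalues i)|))) := by
  have h1z0 : 0 ≤ (1 - z).re := by simp [Complex.sub_re]; linarith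
  have h1z1 : (1 - z).re ≤ 1 := by simp [Complex.sub_re]; linarith
  calc ‖(A.mcpow z * B.mcpow z * A.mcpow (1-z) * B.mcpow (1-z)).trace‖
      ≤ (A.mcpow z * B.mcpow z).frob * (A.mcpow (1-z) * B.mcpow (1-z)).frob :=
        abs_trace4_le _ _ _ _
    _ ≤ ((A.mcpow z).frob * (B.mcpow z).frob) *
          ((A.mcpow (1-z)).frob * (B.mcpow (1-z)).frob) := by
        apply mul_le_mul (frob_submul _ _) (frob_submul _ _) (frob_nonneg _)
          (mul_nonneg (frob_nonneg _) (frob_nonneg _))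
    _ ≤ _ := by
        apply mul_le_mul
        · exact mul_le_mul (frob_mcpow_le hA h0 h1) (frob_mcpow_le hB h0 h1) (frob_nonneg _)
            (Real.sqrt_nonneg _)
        · exact mul_le_mul (frob_mcpow_le hA h1z0 h1z1) (frob_mcpow_le hB h1z0 h1z1)
            (frob_nonneg _) (Real.sqrt_nonneg _)
        · exact mul_nonneg (frob_nonneg _) (frob_nonneg _)
        · exact mul_nonneg (Real.sqrt_nonneg _) (Real.sqrt_nonneg _)

set_option maxHeartbeats 2000000 in
lemma interior_bound (hA : A.PosDef) (hB : B.PosDef) {z : ℂ}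
    (h1 : 1/4 ≤ z.re) (h2 : z.re ≤ 1/2) :
    ‖(A.mcpow z * B.mcpow z * A.mcpow (1-z) * B.mcpow (1-z)).trace‖
      ≤ (A * B).trace.re := by
  have hc0 : 0 ≤ (A * B).trace.re := trace_AB_re_nonneg hA hB
  set F : ℂ → ℂ := fun w => (A.mcpow w * B.mcpow w * A.mcpow (1-w) * B.mcpow (1-w)).trace
    with hFdef
  set g : ℂ → ℂ := fun w => F ((1 + w) / ((4:ℝ):ℂ)) with hgdef
  have hre : ∀ w : ℂ, ((1 + w) / ((4:ℝ):ℂ)).re = (1 + w.re) / 4 := by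
    intro w
    rw [Complex.div_ofReal_re, Complex.add_re, Complex.one_re]
  have hgdiff : Differentiable ℂ g :=
    (F_differentiable hA hB).comp
      (((differentiable_const (1:ℂ)).add differentiable_id).div_const _)
  have hmem : (4 * z - 1) ∈ Complex.HadamardThreeLines.verticalClosedStrip 0 1 := by
    simp only [Complex.HadamardThreeLines.verticalClosedStrip, Set.mem_preimage, Set.mem_Icc,
      Complex.sub_re, Complex.mul_re, Complex.one_re]
    norm_num
    constructor <;> linarith
  have hBdd : BddAbove ((norm ∘ g) '' Complex.HadamardThreeLines.verticalClosedStrip 0 1) := by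
    refine ⟨(Real.sqrt (∑ i, Real.exp (2 * |Real.log (hA.1.eigenvalues i)|)) *
          Real.sqrt (∑ i, Real.exp (2 * |Real.log (hB.1.eigenvalues i)|))) *
        (Real.sqrt (∑ i, Real.exp (2 * |Real.log (hA.1.eigenvalues i)|)) *
          Real.sqrt (∑ i, Real.exp (2 * |Real.log (hB.1.eigenvalues i)|))), ?_⟩
    rintro y ⟨w, hw, rfl⟩
    simp only [Complex.HadamardThreeLines.verticalClosedStrip, Set.mem_preimage,
      Set.mem_Icc] at hw
    have hw0 : 0 ≤ ((1 + w) / ((4:ℝ):ℂ)).re := by rw [hre]; linarith [hw.1]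
    have hw1 : ((1 + w) / ((4:ℝ):ℂ)).re ≤ 1 := by rw [hre]; linarith [hw.2]
    exact F_strip_bound hA hB hw0 hw1
  have ha : ∀ w ∈ Complex.re ⁻¹' {0}, ‖g w‖ ≤ (A * B).trace.re := by
    intro w hw
    have : ((1 + w) / ((4:ℝ):ℂ)).re = 1/4 := by
      rw [hre, Set.mem_preimage, Set.mem_singleton_iff] at *
      rw [hw]; norm_num
    exact quarter_line hA hB this
  have hb : ∀ w ∈ Complex.re ⁻¹' {1}, ‖g w‖ ≤ (A * B).trace.re := by
    intro w hw
    have : ((1 + w) / ((4:ℝ):ℂ)).re = 1/2 := by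
      rw [hre, Set.mem_preimage, Set.mem_singleton_iff] at *
      rw [hw]; norm_num
    exact half_line hA hB this
  have hmain := Complex.HadamardThreeLines.norm_le_interp_of_mem_verticalClosedStrip' (f := g) (by norm_num : (0:ℝ) < 1) hmem
    hgdiff.diffContOnCl hBdd ha hb
  have harg : ((1 + (4 * z - 1)) / ((4:ℝ):ℂ)) = z := by push_cast; ring
  have hgz : g (4 * z - 1) = F z := by
    show F ((1 + (4 * z - 1)) / ((4:ℝ):ℂ)) = F z
    rw [harg]
  have hrhs : (A * B).trace.re ^ (1 - (4 * z - 1).re) * (A * B).trace.re ^ (4 * z - 1).re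
      = (A * B).trace.re := by
    rw [← Real.rpow_add' hc0 (by norm_num)]
    norm_num
  simp only [sub_zero, div_one] at hmain
  rw [hgz, hrhs] at hmain
  exact hmain

end AHO

theorem stmt3 {n : ℕ} {A B : Matrix (Fin n) (Fin n) ℂ}
    (hA : A.PosDef) (hB : B.PosDef) (z : ℂ) (hz1 : 1 / 4 ≤ z.re) (hz2 : z.re ≤ 3 / 4) :
    (A.mcpow z * B.mcpow z * A.mcpow (1 - z) * B.mcpow (1 - z)).trace.re ≤
      (A * B).trace.re := by
  by_cases hhalf : z.re ≤ 1/2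
  · exact le_trans (Complex.re_le_norm _) (AHO.interior_bound hA hB hz1 hhalf)
  · push_neg at hhalf
    have h1 : 1/4 ≤ (1 - z).re := by
      simp only [Complex.sub_re, Complex.one_re]; linarith
    have h2 : (1 - z).re ≤ 1/2 := by
      simp only [Complex.sub_re, Complex.one_re]; linarith
    have hsw : (A.mcpow z * B.mcpow z * A.mcpow (1 - z) * B.mcpow (1 - z)).trace
        = (A.mcpow (1-z) * B.mcpow (1-z) * A.mcpow (1 - (1-z)) * B.mcpow (1 - (1-z))).trace := by
      rw [show (1:ℂ) - (1 - z) = z from by ring]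
      rw [Matrix.mul_assoc (A.mcpow z * B.mcpow z),
        Matrix.mul_assoc (A.mcpow (1-z) * B.mcpow (1-z)), Matrix.trace_mul_comm]
    rw [hsw]
    exact le_trans (Complex.re_le_norm _) (AHO.interior_bound hA hB h1 h2)
end

section
/- For positive semidefinite n×n complex matrices A, B and any real t with 1/4 ≤ t ≤ 3/4, ‖A^t B^{1-t} + B^t A^{1-t}‖_2 ≤ ‖A + B‖_2 in the Frobenius norm. -/
open Matrix Complex
open scoped ComplexOrder

namespace Frob6

variable {n : ℕ} {A B : Matrix (Fin n) (Fin n) ℂ}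

lemma mpow_eq (hA : A.IsHermitian) (p : ℝ) :
    A.mpow p = (hA.eigenvectorUnitary : Matrix (Fin n) (Fin n) ℂ) *
      Matrix.diagonal (fun i => ((hA.eigenvalues i ^ p : ℝ) : ℂ)) *
      (star (hA.eigenvectorUnitary : Matrix (Fin n) (Fin n) ℂ)) := by
  rw [Matrix.mpow, dif_pos hA]

lemma trace_dMdN' (d e : Fin n → ℂ) (M N : Matrix (Fin n) (Fin n) ℂ) :
    (Matrix.diagonal d * (M * (Matrix.diagonal e * N))).trace
      = ∑ i, ∑ j, d i * M i j * e j * N j i := by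
  simp only [Matrix.trace, Matrix.diag_apply, Matrix.mul_apply, Matrix.diagonal_apply,
    Finset.mul_sum, Finset.sum_mul]
  rw [Finset.sum_congr rfl]
  intro i _
  rw [Finset.sum_comm]
  rw [Finset.sum_congr rfl]
  intro j _
  simp [Finset.mul_sum, ite_mul, Finset.sum_ite_eq, Finset.sum_ite_eq']
  ring

lemma trace_MNd (e : Fin n → ℂ) (M N : Matrix (Fin n) (Fin n) ℂ) :
    (M * (N * Matrix.diagonal e)).trace = ∑ i, ∑ j, M i j * N j i * e i := by
  simp only [Matrix.trace, Matrix.diag_apply, Matrix.mul_apply, Matrix.mul_diagonal,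
    Finset.sum_mul]
  rw [Finset.sum_congr rfl]
  intro i _
  rw [Finset.sum_congr rfl]
  intro j _
  simp only [Matrix.diagonal_apply, mul_ite, mul_zero, Finset.mul_sum]
  rw [Finset.sum_eq_single i]
  · simp; ring
  · intro b _ hb; simp [hb]
  · simp

/-- trace of U * Z * (star U) equals trace Z for unitary U -/
lemma trace_unit_conj {U Z : Matrix (Fin n) (Fin n) ℂ} (h : star U * U = 1) :
    (U * (Z * star U)).trace = Z.trace := by
  rw [Matrix.trace_mul_comm U (Z * star U), Matrix.mul_assoc, h, Matrix.mul_one]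

/-- Collapse: expansion of `Tr(A^p B^q)` in terms of the overlap matrix. -/
lemma trace_mpow_pair (hA : A.PosSemidef) (hB : B.PosSemidef) (p q : ℝ) :
    ((A.mpow p * B.mpow q).trace).re
      = ∑ i, ∑ j, hA.1.eigenvalues i ^ p * hB.1.eigenvalues j ^ q *
          Complex.normSq ((star (hA.1.eigenvectorUnitary : Matrix (Fin n) (Fin n) ℂ) *
            (hB.1.eigenvectorUnitary : Matrix (Fin n) (Fin n) ℂ)) i j) := by
  set U := (hA.1.eigenvectorUnitary : Matrix (Fin n) (Fin n) ℂ) with hUdef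
  set V := (hB.1.eigenvectorUnitary : Matrix (Fin n) (Fin n) ℂ) with hVdef
  set W := star U * V with hWdef
  have hsW : star V * U = star W := by rw [hWdef, Matrix.star_mul, star_star]
  have h1 : (A.mpow p * B.mpow q).trace
      = (Matrix.diagonal (fun i => ((hA.1.eigenvalues i ^ p : ℝ) : ℂ)) *
          (W * (Matrix.diagonal (fun j => ((hB.1.eigenvalues j ^ q : ℝ) : ℂ)) * star W))).trace := by
    rw [mpow_eq hA.1, mpow_eq hB.1]
    simp only [Matrix.mul_assoc]
    rw [Matrix.trace_mul_comm U]
    simp only [Matrix.mul_assoc]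
    rw [hsW, ← Matrix.mul_assoc (star U) V]
  rw [h1, trace_dMdN', Complex.re_sum]
  apply Finset.sum_congr rfl
  intro i _
  rw [Complex.re_sum]
  apply Finset.sum_congr rfl
  intro j _
  have hterm : ((hA.1.eigenvalues i ^ p : ℝ) : ℂ) * W i j * ((hB.1.eigenvalues j ^ q : ℝ) : ℂ) *
      (star W) j i = ((hA.1.eigenvalues i ^ p * hB.1.eigenvalues j ^ q *
        Complex.normSq (W i j) : ℝ) : ℂ) := by
    rw [Matrix.star_apply]
    have : ((hA.1.eigenvalues i ^ p : ℝ) : ℂ) * W i j * ((hB.1.eigenvalues j ^ q : ℝ) : ℂ) *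
        star (W i j) = ((hA.1.eigenvalues i ^ p : ℝ) : ℂ) * ((hB.1.eigenvalues j ^ q : ℝ) : ℂ) *
          (W i j * star (W i j)) := by ring
    rw [this, show star (W i j) = (starRingEnd ℂ) (W i j) from rfl, Complex.mul_conj]
    push_cast
    ring
  rw [hterm, Complex.ofReal_re]

lemma eigenvalues_rpow_nonneg (hA : A.PosSemidef) (p : ℝ) (i : Fin n) :
    0 ≤ hA.1.eigenvalues i ^ p :=
  Real.rpow_nonneg (hA.eigenvalues_nonneg i) p

lemma sum_normSq_row (hA : A.IsHermitian) (hB : B.IsHermitian) (i : Fin n) :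
    ∑ j, Complex.normSq ((star (hA.eigenvectorUnitary : Matrix (Fin n) (Fin n) ℂ) *
      (hB.eigenvectorUnitary : Matrix (Fin n) (Fin n) ℂ)) i j) = 1 := by
  set U := (hA.eigenvectorUnitary : Matrix (Fin n) (Fin n) ℂ) with hUdef
  set V := (hB.eigenvectorUnitary : Matrix (Fin n) (Fin n) ℂ) with hVdef
  set W := star U * V with hWdef
  have hVV : V * star V = 1 := Matrix.mem_unitaryGroup_iff.mp (hB.eigenvectorUnitary).2
  have hW'W : star U * U = 1 := Matrix.mem_unitaryGroup_iff'.mp (hA.eigenvectorUnitary).2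
  have hWW : W * star W = 1 := by
    rw [hWdef, Matrix.star_mul, star_star, Matrix.mul_assoc, ← Matrix.mul_assoc V, hVV,
      Matrix.one_mul, hW'W]
  have h := congrFun (congrFun hWW i) i
  rw [Matrix.mul_apply] at h
  simp only [Matrix.star_apply, RCLike.star_def, Complex.mul_conj, Matrix.one_apply_eq] at h
  exact_mod_cast h

lemma sum_normSq_col (hA : A.IsHermitian) (hB : B.IsHermitian) (j : Fin n) :
    ∑ i, Complex.normSq ((star (hA.eigenvectorUnitary : Matrix (Fin n) (Fin n) ℂ) *
      (hB.eigenvectorUnitary : Matrix (Fin n) (Fin n) ℂ)) i j) = 1 := by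
  set U := (hA.eigenvectorUnitary : Matrix (Fin n) (Fin n) ℂ) with hUdef
  set V := (hB.eigenvectorUnitary : Matrix (Fin n) (Fin n) ℂ) with hVdef
  set W := star U * V with hWdef
  have hUU : U * star U = 1 := Matrix.mem_unitaryGroup_iff.mp (hA.eigenvectorUnitary).2
  have hV'V : star V * V = 1 := Matrix.mem_unitaryGroup_iff'.mp (hB.eigenvectorUnitary).2
  have hWW : star W * W = 1 := by
    rw [hWdef, Matrix.star_mul, star_star, Matrix.mul_assoc, ← Matrix.mul_assoc U, hUU,
      Matrix.one_mul, hV'V]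
  have h := congrFun (congrFun hWW j) j
  rw [Matrix.mul_apply] at h
  simp only [Matrix.star_apply, RCLike.star_def, Matrix.one_apply_eq] at h
  have h2 : ∑ i, ((Complex.normSq (W i j) : ℝ) : ℂ) = 1 := by
    rw [← h]
    apply Finset.sum_congr rfl
    intro i _
    rw [mul_comm, Complex.mul_conj]
  exact_mod_cast h2

lemma rpow_rearrange {x y : ℝ} (hx : 0 ≤ x) (hy : 0 ≤ y) {p q : ℝ} (hp : 0 ≤ p) (hq : 0 ≤ q) :
    x ^ p * y ^ q + x ^ q * y ^ p ≤ x ^ (p + q) + y ^ (p + q) := by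
  rw [Real.rpow_add_of_nonneg hx hp hq, Real.rpow_add_of_nonneg hy hp hq]
  rcases le_total x y with h | h
  · nlinarith [mul_nonneg (sub_nonneg.2 (Real.rpow_le_rpow hx h hp))
      (sub_nonneg.2 (Real.rpow_le_rpow hx h hq))]
  · nlinarith [mul_nonneg (sub_nonneg.2 (Real.rpow_le_rpow hy h hp))
      (sub_nonneg.2 (Real.rpow_le_rpow hy h hq))]

lemma lemA {M C : Matrix (Fin n) (Fin n) ℂ} (hM : M.PosSemidef) (hC : C.IsHermitian)
    {p q : ℝ} (hp : 0 ≤ p) (hq : 0 ≤ q) :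
    ((C * M.mpow p * C * M.mpow q).trace).re ≤ ((C * C * M.mpow (p + q)).trace).re := by
  set U := (hM.1.eigenvectorUnitary : Matrix (Fin n) (Fin n) ℂ) with hUdef
  have hUU : U * star U = 1 := Matrix.mem_unitaryGroup_iff.mp (hM.1.eigenvectorUnitary).2
  have hU'U : star U * U = 1 := Matrix.mem_unitaryGroup_iff'.mp (hM.1.eigenvectorUnitary).2
  set F := star U * C * U with hFdef
  have hFh : F.IsHermitian := by
    rw [hFdef, Matrix.star_eq_conjTranspose]
    exact Matrix.isHermitian_conjTranspose_mul_mul U hC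
  have hCU : U * F * star U = C := by
    rw [hFdef]
    calc U * (star U * C * U) * star U
        = U * star U * C * (U * star U) := by simp only [Matrix.mul_assoc]
      _ = C := by rw [hUU, Matrix.one_mul, Matrix.mul_one]
  have hcancel : ∀ Z : Matrix (Fin n) (Fin n) ℂ, star U * (U * Z) = Z := by
    intro Z
    rw [← Matrix.mul_assoc, hU'U, Matrix.one_mul]
  set lam := hM.1.eigenvalues with hlam
  have hL : (C * M.mpow p * C * M.mpow q).trace
      = (Matrix.diagonal (fun i => ((lam i ^ p : ℝ) : ℂ)) *
          (F * (Matrix.diagonal (fun i => ((lam i ^ q : ℝ) : ℂ)) * F))).trace := by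
    rw [mpow_eq hM.1, mpow_eq hM.1]
    conv_lhs => rw [← hCU]
    simp only [Matrix.mul_assoc]
    rw [← hUdef, ← hlam]
    simp only [hcancel]
    rw [Matrix.trace_mul_comm U]
    simp only [Matrix.mul_assoc, hcancel, hU'U, Matrix.mul_one]
    rw [Matrix.trace_mul_comm F]
    simp only [Matrix.mul_assoc]
  have hR : (C * C * M.mpow (p + q)).trace
      = (F * (F * Matrix.diagonal (fun i => ((lam i ^ (p + q) : ℝ) : ℂ)))).trace := by
    rw [mpow_eq hM.1]
    conv_lhs => rw [← hCU]
    simp only [Matrix.mul_assoc]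
    rw [← hUdef, ← hlam]
    simp only [hcancel]
    rw [Matrix.trace_mul_comm U]
    simp only [Matrix.mul_assoc, hcancel, hU'U, Matrix.mul_one]
  set w : Fin n → Fin n → ℝ := fun i j => Complex.normSq (F i j) with hw
  have hwsymm : ∀ i j, w i j = w j i := by
    intro i j
    rw [hw]
    simp only
    rw [← hFh.apply i j, RCLike.star_def, Complex.normSq_conj]
  have hwn : ∀ i j, 0 ≤ w i j := fun i j => Complex.normSq_nonneg _
  have hLs : ((C * M.mpow p * C * M.mpow q).trace).re
      = ∑ i, ∑ j, lam i ^ p * lam j ^ q * w i j := by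
    rw [hL, trace_dMdN']
    simp only [Complex.re_sum]
    apply Finset.sum_congr rfl; intro i _
    apply Finset.sum_congr rfl; intro j _
    have h1 : ((lam i ^ p : ℝ) : ℂ) * F i j * ((lam j ^ q : ℝ) : ℂ) * F j i
        = ((lam i ^ p * lam j ^ q * w i j : ℝ) : ℂ) := by
      rw [← hFh.apply j i, RCLike.star_def]
      have : ((lam i ^ p : ℝ) : ℂ) * F i j * ((lam j ^ q : ℝ) : ℂ) * (starRingEnd ℂ) (F i j)
          = ((lam i ^ p : ℝ) : ℂ) * ((lam j ^ q : ℝ) : ℂ) * (F i j * (starRingEnd ℂ) (F i j)) := by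
        ring
      rw [this, Complex.mul_conj]
      push_cast
      ring
    rw [h1, Complex.ofReal_re]
  have hRs : ((C * C * M.mpow (p + q)).trace).re
      = ∑ i, ∑ j, lam i ^ (p + q) * w i j := by
    rw [hR, trace_MNd]
    simp only [Complex.re_sum]
    apply Finset.sum_congr rfl; intro i _
    apply Finset.sum_congr rfl; intro j _
    have h1 : F i j * F j i * ((lam i ^ (p + q) : ℝ) : ℂ)
        = ((lam i ^ (p + q) * w i j : ℝ) : ℂ) := by
      rw [← hFh.apply j i, RCLike.star_def]
      have : F i j * (starRingEnd ℂ) (F i j) * ((lam i ^ (p + q) : ℝ) : ℂ)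
          = ((lam i ^ (p + q) : ℝ) : ℂ) * (F i j * (starRingEnd ℂ) (F i j)) := by ring
      rw [this, Complex.mul_conj]
      push_cast
      ring
    rw [h1, Complex.ofReal_re]
  rw [hLs, hRs]
  have hswapL : ∑ i, ∑ j, lam i ^ p * lam j ^ q * w i j
      = ∑ i, ∑ j, lam j ^ p * lam i ^ q * w i j := by
    rw [Finset.sum_comm]
    apply Finset.sum_congr rfl; intro i _
    apply Finset.sum_congr rfl; intro j _
    rw [hwsymm]
  have hswapR : ∑ i, ∑ j, lam i ^ (p + q) * w i j
      = ∑ i, ∑ j, lam j ^ (p + q) * w i j := by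
    rw [Finset.sum_comm]
    apply Finset.sum_congr rfl; intro i _
    apply Finset.sum_congr rfl; intro j _
    rw [hwsymm]
  have e1 : (∑ i, ∑ j, lam i ^ p * lam j ^ q * w i j) * 2
      = ∑ i, ∑ j, (lam i ^ p * lam j ^ q + lam i ^ q * lam j ^ p) * w i j := by
    rw [mul_two]
    nth_rewrite 2 [hswapL]
    rw [← Finset.sum_add_distrib]
    apply Finset.sum_congr rfl; intro i _
    rw [← Finset.sum_add_distrib]
    apply Finset.sum_congr rfl; intro j _
    ring
  have e2 : (∑ i, ∑ j, lam i ^ (p + q) * w i j) * 2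
      = ∑ i, ∑ j, (lam i ^ (p + q) + lam j ^ (p + q)) * w i j := by
    rw [mul_two]
    nth_rewrite 2 [hswapR]
    rw [← Finset.sum_add_distrib]
    apply Finset.sum_congr rfl; intro i _
    rw [← Finset.sum_add_distrib]
    apply Finset.sum_congr rfl; intro j _
    ring
  have h2 : (∑ i, ∑ j, lam i ^ p * lam j ^ q * w i j) * 2
      ≤ (∑ i, ∑ j, lam i ^ (p + q) * w i j) * 2 := by
    rw [e1, e2]
    apply Finset.sum_le_sum; intro i _
    apply Finset.sum_le_sum; intro j _
    exact mul_le_mul_of_nonneg_right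
      (rpow_rearrange (hM.eigenvalues_nonneg i) (hM.eigenvalues_nonneg j) hp hq) (hwn i j)
  linarith

lemma mpow_isHermitian (hA : A.IsHermitian) (p : ℝ) : (A.mpow p).IsHermitian := by
  rw [mpow_eq hA p, Matrix.star_eq_conjTranspose]
  exact Matrix.isHermitian_mul_mul_conjTranspose _
    (Matrix.isHermitian_diagonal_of_self_adjoint _
      (by ext i; simp [Pi.star_apply, Complex.conj_ofReal]))

lemma mpow_mul_mpow (hA : A.PosSemidef) {p q : ℝ} (hp : 0 ≤ p) (hq : 0 ≤ q) :
    A.mpow p * A.mpow q = A.mpow (p + q) := by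
  have h1 : (star (hA.1.eigenvectorUnitary : Matrix (Fin n) (Fin n) ℂ)) *
      (hA.1.eigenvectorUnitary : Matrix (Fin n) (Fin n) ℂ) = 1 :=
    Matrix.mem_unitaryGroup_iff'.mp (hA.1.eigenvectorUnitary).2
  rw [mpow_eq hA.1, mpow_eq hA.1, mpow_eq hA.1]
  simp only [Matrix.mul_assoc]
  rw [← Matrix.mul_assoc (star _), h1, Matrix.one_mul,
    ← Matrix.mul_assoc (Matrix.diagonal _) (Matrix.diagonal _), Matrix.diagonal_mul_diagonal]
  have hfun : (fun i => ((hA.1.eigenvalues i ^ p : ℝ) : ℂ) * ((hA.1.eigenvalues i ^ q : ℝ) : ℂ))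
      = fun i => ((hA.1.eigenvalues i ^ (p + q) : ℝ) : ℂ) := by
    funext i
    rw [← Complex.ofReal_mul, ← Real.rpow_add_of_nonneg (hA.eigenvalues_nonneg i) hp hq]
  rw [hfun]

lemma mpow_one (hA : A.PosSemidef) : A.mpow 1 = A := by
  rw [mpow_eq hA.1]
  conv_rhs => rw [hA.1.spectral_theorem]
  have hfun : (fun i => ((hA.1.eigenvalues i ^ (1:ℝ) : ℝ) : ℂ))
      = RCLike.ofReal ∘ hA.1.eigenvalues := by
    funext i
    simp [Real.rpow_one]
  rw [hfun, Unitary.conjStarAlgAut_apply]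

lemma scalar_main {x y : ℝ} (hx : 0 ≤ x) (hy : 0 ≤ y) {t : ℝ} (ht1 : 1/4 ≤ t) (ht2 : t ≤ 3/4) :
    2 * (x ^ (2*t) * y ^ (2-2*t) + x ^ (2-2*t) * y ^ (2*t))
      ≤ x ^ (2:ℝ) + y ^ (2:ℝ) + 2*(x*y) := by
  have ha0 : (0:ℝ) ≤ 2*t - 1/2 := by linarith
  have hb0 : (0:ℝ) ≤ 3/2 - 2*t := by linarith
  have hdx1 : x ^ (2*t) = x ^ (1/2:ℝ) * x ^ (2*t - 1/2) := by
    rw [← Real.rpow_add_of_nonneg hx (by norm_num) ha0]; ring_nf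
  have hdy1 : y ^ (2-2*t) = y ^ (1/2:ℝ) * y ^ (3/2 - 2*t) := by
    rw [← Real.rpow_add_of_nonneg hy (by norm_num) hb0]; ring_nf
  have hdx2 : x ^ (2-2*t) = x ^ (1/2:ℝ) * x ^ (3/2 - 2*t) := by
    rw [← Real.rpow_add_of_nonneg hx (by norm_num) hb0]; ring_nf
  have hdy2 : y ^ (2*t) = y ^ (1/2:ℝ) * y ^ (2*t - 1/2) := by
    rw [← Real.rpow_add_of_nonneg hy (by norm_num) ha0]; ring_nf
  have key : x ^ (2*t - 1/2) * y ^ (3/2 - 2*t) + x ^ (3/2 - 2*t) * y ^ (2*t - 1/2) ≤ x + y := by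
    have h := rpow_rearrange hx hy ha0 hb0
    have hab : 2*t - 1/2 + (3/2 - 2*t) = 1 := by ring
    rwa [hab, Real.rpow_one, Real.rpow_one] at h
  have hu0 : 0 ≤ x ^ (1/2:ℝ) := Real.rpow_nonneg hx _
  have hv0 : 0 ≤ y ^ (1/2:ℝ) := Real.rpow_nonneg hy _
  have hu : x ^ (1/2:ℝ) * x ^ (1/2:ℝ) = x := by
    rw [← Real.rpow_add_of_nonneg hx (by norm_num) (by norm_num)]; norm_num
  have hv : y ^ (1/2:ℝ) * y ^ (1/2:ℝ) = y := by
    rw [← Real.rpow_add_of_nonneg hy (by norm_num) (by norm_num)]; norm_num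
  have huv : 2 * (x ^ (1/2:ℝ) * y ^ (1/2:ℝ)) ≤ x + y := by
    nlinarith [sq_nonneg (x ^ (1/2:ℝ) - y ^ (1/2:ℝ))]
  have hx2 : x ^ (2:ℝ) = x * x := by
    rw [show (2:ℝ) = 1 + 1 by norm_num, Real.rpow_add_of_nonneg hx (by norm_num) (by norm_num),
      Real.rpow_one]
  have hy2 : y ^ (2:ℝ) = y * y := by
    rw [show (2:ℝ) = 1 + 1 by norm_num, Real.rpow_add_of_nonneg hy (by norm_num) (by norm_num),
      Real.rpow_one]
  calc 2 * (x ^ (2*t) * y ^ (2-2*t) + x ^ (2-2*t) * y ^ (2*t))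
      = 2 * ((x ^ (1/2:ℝ) * y ^ (1/2:ℝ)) *
          (x ^ (2*t - 1/2) * y ^ (3/2 - 2*t) + x ^ (3/2 - 2*t) * y ^ (2*t - 1/2))) := by
        rw [hdx1, hdy1, hdx2, hdy2]; ring
    _ ≤ 2 * ((x ^ (1/2:ℝ) * y ^ (1/2:ℝ)) * (x + y)) := by
        have h0 : 0 ≤ x ^ (1/2:ℝ) * y ^ (1/2:ℝ) := mul_nonneg hu0 hv0
        nlinarith [mul_le_mul_of_nonneg_left key h0]
    _ = (2 * (x ^ (1/2:ℝ) * y ^ (1/2:ℝ))) * (x + y) := by ring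
    _ ≤ (x + y) * (x + y) := mul_le_mul_of_nonneg_right huv (by linarith)
    _ = x ^ (2:ℝ) + y ^ (2:ℝ) + 2*(x*y) := by rw [hx2, hy2]; ring

lemma re_trace_conj_mul (Z W : Matrix (Fin n) (Fin n) ℂ) :
    ((Zᴴ * W).trace).re
      = ∑ p : Fin n × Fin n, ((starRingEnd ℂ) (Z p.2 p.1) * W p.2 p.1).re := by
  rw [Fintype.sum_prod_type]
  simp only [Matrix.trace, Complex.re_sum, Matrix.diag_apply, Matrix.mul_apply,
    Matrix.conjTranspose_apply, RCLike.star_def]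

lemma re_trace_self (X : Matrix (Fin n) (Fin n) ℂ) :
    ((Xᴴ * X).trace).re = ∑ p : Fin n × Fin n, ‖X p.2 p.1‖ ^ 2 := by
  rw [re_trace_conj_mul]
  congr 1
  funext p
  have : (starRingEnd ℂ) (X p.2 p.1) * X p.2 p.1 = ((Complex.normSq (X p.2 p.1) : ℝ) : ℂ) := by
    rw [mul_comm, Complex.mul_conj]
  rw [this, ← Complex.sq_norm]
  exact Complex.ofReal_re _

lemma re_trace_self_nonneg (X : Matrix (Fin n) (Fin n) ℂ) : 0 ≤ ((Xᴴ * X).trace).re := by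
  rw [re_trace_self]
  positivity

lemma cs_trace (X Y : Matrix (Fin n) (Fin n) ℂ) :
    ((Xᴴ * Y).trace).re ≤ Real.sqrt ((Xᴴ * X).trace.re) * Real.sqrt ((Yᴴ * Y).trace.re) := by
  rw [re_trace_conj_mul, re_trace_self, re_trace_self]
  calc ∑ p : Fin n × Fin n, ((starRingEnd ℂ) (X p.2 p.1) * Y p.2 p.1).re
      ≤ ∑ p : Fin n × Fin n, ‖X p.2 p.1‖ * ‖Y p.2 p.1‖ := by
        apply Finset.sum_le_sum
        intro p _
        calc ((starRingEnd ℂ) (X p.2 p.1) * Y p.2 p.1).re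
            ≤ ‖(starRingEnd ℂ) (X p.2 p.1) * Y p.2 p.1‖ := Complex.re_le_norm _
          _ = ‖X p.2 p.1‖ * ‖Y p.2 p.1‖ := by
              rw [norm_mul, Complex.norm_conj]
    _ ≤ _ := Real.sum_mul_le_sqrt_mul_sqrt _ _ _

lemma trace_mpow_self (hA : A.PosSemidef) (p : ℝ) :
    ((A.mpow p).trace).re = ∑ i, hA.1.eigenvalues i ^ p := by
  rw [mpow_eq hA.1]
  rw [Matrix.trace_mul_cycle]
  rw [Matrix.mem_unitaryGroup_iff'.mp (hA.1.eigenvectorUnitary).2, Matrix.one_mul,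
    Matrix.trace_diagonal]
  rw [Complex.re_sum]
  apply Finset.sum_congr rfl
  intro i _
  exact Complex.ofReal_re _

lemma frob_conjTranspose (M : Matrix (Fin n) (Fin n) ℂ) : Matrix.frob (Mᴴ) = Matrix.frob M := by
  unfold Matrix.frob
  rw [Matrix.conjTranspose_conjTranspose, Matrix.trace_mul_comm]

lemma main_half (hA : A.PosSemidef) (hB : B.PosSemidef) {t : ℝ} (ht1 : 1/4 ≤ t) (ht2 : t ≤ 1/2) :
    Matrix.frob (A.mpow t * B.mpow (1 - t) + B.mpow t * A.mpow (1 - t))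
      ≤ Matrix.frob (A + B) := by
  have ht0 : (0:ℝ) ≤ t := by linarith
  have h1t : (0:ℝ) ≤ 1 - t := by linarith
  have h12t : (0:ℝ) ≤ 1 - 2*t := by linarith
  have h24t : (0:ℝ) ≤ 2 - 4*t := by linarith
  have hAt : (A.mpow t)ᴴ = A.mpow t := mpow_isHermitian hA.1 t
  have hA1t : (A.mpow (1-t))ᴴ = A.mpow (1-t) := mpow_isHermitian hA.1 (1-t)
  have hA12 : (A.mpow (1-2*t))ᴴ = A.mpow (1-2*t) := mpow_isHermitian hA.1 (1-2*t)
  have hBt : (B.mpow t)ᴴ = B.mpow t := mpow_isHermitian hB.1 t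
  have hB1t : (B.mpow (1-t))ᴴ = B.mpow (1-t) := mpow_isHermitian hB.1 (1-t)
  set X := A.mpow t * B.mpow (1 - t) with hXdef
  set Y := B.mpow t * A.mpow (1 - t) with hYdef
  have hXH : Xᴴ = B.mpow (1-t) * A.mpow t := by
    rw [hXdef, Matrix.conjTranspose_mul, hAt, hB1t]
  have hYH : Yᴴ = A.mpow (1-t) * B.mpow t := by
    rw [hYdef, Matrix.conjTranspose_mul, hBt, hA1t]
  -- power addition facts
  have hAtt : A.mpow t * A.mpow t = A.mpow (2*t) := by
    rw [show (2*t:ℝ) = t + t by ring]; exact mpow_mul_mpow hA ht0 ht0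
  have hA1t1t : A.mpow (1-t) * A.mpow (1-t) = A.mpow (2-2*t) := by
    rw [show (2-2*t:ℝ) = (1-t) + (1-t) by ring]; exact mpow_mul_mpow hA h1t h1t
  have hBtt : B.mpow t * B.mpow t = B.mpow (2*t) := by
    rw [show (2*t:ℝ) = t + t by ring]; exact mpow_mul_mpow hB ht0 ht0
  have hB1t1t : B.mpow (1-t) * B.mpow (1-t) = B.mpow (2-2*t) := by
    rw [show (2-2*t:ℝ) = (1-t) + (1-t) by ring]; exact mpow_mul_mpow hB h1t h1t
  have hA1212 : A.mpow (1-2*t) * A.mpow (1-2*t) = A.mpow (2-4*t) := by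
    rw [show (2-4*t:ℝ) = (1-2*t) + (1-2*t) by ring]; exact mpow_mul_mpow hA h12t h12t
  have hA12t : A.mpow (1-2*t) * A.mpow t = A.mpow (1-t) := by
    rw [show (1-t:ℝ) = (1-2*t) + t by ring]; exact mpow_mul_mpow hA h12t ht0
  -- generic trace identity for hermitian products
  have trace_herm : ∀ P Q : Matrix (Fin n) (Fin n) ℂ, Pᴴ = P → Qᴴ = Q →
      ((P * Q)ᴴ * (P * Q)).trace = ((P * P) * (Q * Q)).trace := by
    intro P Q hP hQ
    rw [Matrix.conjTranspose_mul, hP, hQ, Matrix.trace_mul_comm]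
    calc ((P * Q) * (Q * P)).trace
        = ((P * (Q * Q)) * P).trace := by
          rw [Matrix.mul_assoc P Q (Q * P), ← Matrix.mul_assoc Q Q P,
            ← Matrix.mul_assoc P (Q * Q) P]
      _ = (P * (P * (Q * Q))).trace := Matrix.trace_mul_comm _ _
      _ = ((P * P) * (Q * Q)).trace := by rw [← Matrix.mul_assoc]
  set n1 : ℝ := ((A.mpow (2*t) * B.mpow (2-2*t)).trace).re with hn1def
  set n2 : ℝ := ((A.mpow (2-2*t) * B.mpow (2*t)).trace).re with hn2def
  have TrXX : ((Xᴴ * X).trace).re = n1 := by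
    rw [hXdef, trace_herm _ _ hAt hB1t, hAtt, hB1t1t, hn1def]
  have TrYY : ((Yᴴ * Y).trace).re = n2 := by
    rw [hYdef, trace_herm _ _ hBt hA1t, hBtt, hA1t1t, hn2def, Matrix.trace_mul_comm]
  have hn1nn : 0 ≤ n1 := by rw [← TrXX]; exact re_trace_self_nonneg X
  have hn2nn : 0 ≤ n2 := by rw [← TrYY]; exact re_trace_self_nonneg Y
  -- the auxiliary matrix for the Cauchy-Schwarz step
  set R : Matrix (Fin n) (Fin n) ℂ := A.mpow t * (B.mpow t * A.mpow (1-2*t)) with hRdef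
  have hRH : Rᴴ = A.mpow (1-2*t) * (B.mpow t * A.mpow t) := by
    rw [hRdef, Matrix.conjTranspose_mul, Matrix.conjTranspose_mul, hAt, hBt, hA12,
      Matrix.mul_assoc]
  have TrXY : ((Xᴴ * Y).trace) = ((R * X).trace) := by
    rw [hXH, hYdef, hRdef, hXdef]
    conv_lhs => rw [Matrix.mul_assoc, Matrix.trace_mul_comm (B.mpow (1-t))]
    conv_rhs => rw [Matrix.mul_assoc (A.mpow t) (B.mpow t * A.mpow (1-2*t)) _,
      Matrix.mul_assoc (B.mpow t) (A.mpow (1-2*t)) _,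
      ← Matrix.mul_assoc (A.mpow (1-2*t)) (A.mpow t) _, hA12t]
    simp only [Matrix.mul_assoc]
  have TrRR : ((R * Rᴴ).trace) =
      ((B.mpow t * A.mpow (2-4*t) * B.mpow t * A.mpow (2*t)).trace) := by
    rw [hRH, hRdef]
    conv_lhs =>
      rw [Matrix.mul_assoc (A.mpow t) (B.mpow t * A.mpow (1-2*t)) _,
        Matrix.mul_assoc (B.mpow t) (A.mpow (1-2*t)) _,
        ← Matrix.mul_assoc (A.mpow (1-2*t)) (A.mpow (1-2*t)) _, hA1212,
        Matrix.trace_mul_comm (A.mpow t)]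
    simp only [Matrix.mul_assoc]
    rw [hAtt]
  have TrRR_le : ((R * Rᴴ).trace).re ≤ n2 := by
    rw [TrRR]
    have h := lemA hA hBt h24t (by linarith : (0:ℝ) ≤ 2*t)
    have he : (2 - 4*t) + 2*t = 2 - 2*t := by ring
    rw [he] at h
    calc ((B.mpow t * A.mpow (2-4*t) * B.mpow t * A.mpow (2*t)).trace).re
        ≤ ((B.mpow t * B.mpow t * A.mpow (2-2*t)).trace).re := h
      _ = n2 := by rw [hBtt, Matrix.trace_mul_comm, hn2def]
  -- Cauchy–Schwarz
  have hcs := cs_trace (Rᴴ) X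
  rw [Matrix.conjTranspose_conjTranspose] at hcs
  have hcross : ((Xᴴ * Y).trace).re ≤ (n1 + n2) / 2 := by
    have h1 : ((Xᴴ * Y).trace).re ≤ Real.sqrt (((R * Rᴴ).trace).re) * Real.sqrt n1 := by
      rw [TrXY]
      calc ((R * X).trace).re
          ≤ Real.sqrt (((R * Rᴴ).trace).re) * Real.sqrt (((Xᴴ * X).trace).re) := hcs
        _ = Real.sqrt (((R * Rᴴ).trace).re) * Real.sqrt n1 := by rw [TrXX]
    have h2 : Real.sqrt (((R * Rᴴ).trace).re) ≤ Real.sqrt n2 := Real.sqrt_le_sqrt TrRR_le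
    have h3 : Real.sqrt n2 * Real.sqrt n1 ≤ (n1 + n2) / 2 := by
      nlinarith [sq_nonneg (Real.sqrt n1 - Real.sqrt n2), Real.sq_sqrt hn1nn,
        Real.sq_sqrt hn2nn, Real.sqrt_nonneg n1, Real.sqrt_nonneg n2]
    calc ((Xᴴ * Y).trace).re
        ≤ Real.sqrt (((R * Rᴴ).trace).re) * Real.sqrt n1 := h1
      _ ≤ Real.sqrt n2 * Real.sqrt n1 :=
          mul_le_mul_of_nonneg_right h2 (Real.sqrt_nonneg n1)
      _ ≤ (n1 + n2) / 2 := h3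
  -- expansion of the left-hand side
  have TrYX : ((Yᴴ * X).trace).re = ((Xᴴ * Y).trace).re := by
    have h4 : (Xᴴ * Y)ᴴ = Yᴴ * X := by
      rw [Matrix.conjTranspose_mul Xᴴ Y, Matrix.conjTranspose_conjTranspose]
    rw [← h4, Matrix.trace_conjTranspose]
    exact Complex.conj_re _
  have LHS_exp : (((X + Y)ᴴ * (X + Y)).trace).re
      = n1 + n2 + (((Xᴴ * Y).trace).re + ((Yᴴ * X).trace).re) := by
    rw [Matrix.conjTranspose_add, Matrix.add_mul, Matrix.mul_add, Matrix.mul_add,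
      Matrix.trace_add, Matrix.trace_add, Matrix.trace_add]
    simp only [Complex.add_re]
    rw [TrXX, TrYY]
    ring
  -- expansion of the right-hand side
  set lam := hA.1.eigenvalues with hlamdef
  set mu := hB.1.eigenvalues with hmudef
  set w : Fin n → Fin n → ℝ := fun i j => Complex.normSq
    ((star (hA.1.eigenvectorUnitary : Matrix (Fin n) (Fin n) ℂ) *
      (hB.1.eigenvectorUnitary : Matrix (Fin n) (Fin n) ℂ)) i j) with hwdef
  have hwnn : ∀ i j, 0 ≤ w i j := fun i j => Complex.normSq_nonneg _
  have hn1s : n1 = ∑ i, ∑ j, lam i ^ (2*t) * mu j ^ (2-2*t) * w i j := by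
    rw [hn1def]; exact trace_mpow_pair hA hB (2*t) (2-2*t)
  have hn2s : n2 = ∑ i, ∑ j, lam i ^ (2-2*t) * mu j ^ (2*t) * w i j := by
    rw [hn2def]; exact trace_mpow_pair hA hB (2-2*t) (2*t)
  have hAB : ((A * B).trace).re = ∑ i, ∑ j, lam i * mu j * w i j := by
    have h1 : A * B = A.mpow 1 * B.mpow 1 := by rw [mpow_one hA, mpow_one hB]
    rw [h1, trace_mpow_pair hA hB 1 1]
    simp [Real.rpow_one]
    rfl
  have hAA : ((A * A).trace).re = ∑ i, ∑ j, lam i ^ (2:ℝ) * w i j := by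
    have h1 : A * A = A.mpow 2 := by
      rw [show (2:ℝ) = 1 + 1 by norm_num,
        ← mpow_mul_mpow hA (by norm_num : (0:ℝ) ≤ 1) (by norm_num : (0:ℝ) ≤ 1), mpow_one hA]
    rw [h1, trace_mpow_self hA 2]
    calc ∑ i, lam i ^ (2:ℝ) = ∑ i, lam i ^ (2:ℝ) * ∑ j, w i j := by
          apply Finset.sum_congr rfl; intro i _
          rw [hwdef, sum_normSq_row hA.1 hB.1 i, mul_one]
      _ = ∑ i, ∑ j, lam i ^ (2:ℝ) * w i j := by
          apply Finset.sum_congr rfl; intro i _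
          rw [Finset.mul_sum]
  have hBB : ((B * B).trace).re = ∑ i, ∑ j, mu j ^ (2:ℝ) * w i j := by
    have h1 : B * B = B.mpow 2 := by
      rw [show (2:ℝ) = 1 + 1 by norm_num,
        ← mpow_mul_mpow hB (by norm_num : (0:ℝ) ≤ 1) (by norm_num : (0:ℝ) ≤ 1), mpow_one hB]
    rw [h1, trace_mpow_self hB 2]
    calc ∑ j, mu j ^ (2:ℝ) = ∑ j, mu j ^ (2:ℝ) * ∑ i, w i j := by
          apply Finset.sum_congr rfl; intro j _
          rw [hwdef, sum_normSq_col hA.1 hB.1 j, mul_one]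
      _ = ∑ j, ∑ i, mu j ^ (2:ℝ) * w i j := by
          apply Finset.sum_congr rfl; intro j _
          rw [Finset.mul_sum]
      _ = ∑ i, ∑ j, mu j ^ (2:ℝ) * w i j := Finset.sum_comm
  have RHS_exp : (((A + B)ᴴ * (A + B)).trace).re
      = ∑ i, ∑ j, (lam i ^ (2:ℝ) + mu j ^ (2:ℝ) + 2*(lam i * mu j)) * w i j := by
    have hABH : (A + B)ᴴ = A + B := by
      rw [Matrix.conjTranspose_add, hA.1.eq, hB.1.eq]
    rw [hABH, Matrix.add_mul, Matrix.mul_add, Matrix.mul_add, Matrix.trace_add,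
      Matrix.trace_add, Matrix.trace_add]
    simp only [Complex.add_re]
    have hBA : ((B * A).trace).re = ((A * B).trace).re := by rw [Matrix.trace_mul_comm]
    rw [hAA, hBB, hBA, hAB]
    rw [← Finset.sum_add_distrib, ← Finset.sum_add_distrib, ← Finset.sum_add_distrib]
    apply Finset.sum_congr rfl; intro i _
    rw [← Finset.sum_add_distrib, ← Finset.sum_add_distrib, ← Finset.sum_add_distrib]
    apply Finset.sum_congr rfl; intro j _
    ring
  have hsum_le : 2 * (n1 + n2) ≤ (((A + B)ᴴ * (A + B)).trace).re := by
    rw [RHS_exp, hn1s, hn2s]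
    rw [← Finset.sum_add_distrib, Finset.mul_sum]
    apply Finset.sum_le_sum; intro i _
    rw [← Finset.sum_add_distrib, Finset.mul_sum]
    apply Finset.sum_le_sum; intro j _
    have hx := hA.eigenvalues_nonneg i
    have hy := hB.eigenvalues_nonneg j
    have hs := scalar_main hx hy ht1 (by linarith : t ≤ 3/4)
    calc 2 * (lam i ^ (2*t) * mu j ^ (2-2*t) * w i j + lam i ^ (2-2*t) * mu j ^ (2*t) * w i j)
        = (2 * (lam i ^ (2*t) * mu j ^ (2-2*t) + lam i ^ (2-2*t) * mu j ^ (2*t))) * w i j := by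
          ring
      _ ≤ (lam i ^ (2:ℝ) + mu j ^ (2:ℝ) + 2*(lam i * mu j)) * w i j :=
          mul_le_mul_of_nonneg_right hs (hwnn i j)
  -- put everything together
  have final_sq : (((X + Y)ᴴ * (X + Y)).trace).re ≤ (((A + B)ᴴ * (A + B)).trace).re := by
    rw [LHS_exp, TrYX]
    have : ((Xᴴ * Y).trace).re + ((Xᴴ * Y).trace).re ≤ n1 + n2 := by linarith [hcross]
    linarith [hsum_le]
  unfold Matrix.frob
  exact Real.sqrt_le_sqrt final_sq

lemma mpow_conjTranspose (hA : A.IsHermitian) (p : ℝ) : (A.mpow p)ᴴ = A.mpow p :=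
  mpow_isHermitian hA p

end Frob6

theorem stmt6 {n : ℕ} {A B : Matrix (Fin n) (Fin n) ℂ}
    (hA : A.PosSemidef) (hB : B.PosSemidef) (t : ℝ) (ht1 : 1 / 4 ≤ t) (ht2 : t ≤ 3 / 4) :
    Matrix.frob (A.mpow t * B.mpow (1 - t) + B.mpow t * A.mpow (1 - t)) ≤ Matrix.frob (A + B) := by
  rcases le_or_gt t (1/2) with h | h
  · exact Frob6.main_half hA hB ht1 h
  · have key := Frob6.main_half hA hB (t := 1 - t) (by linarith) (by linarith)
    rw [sub_sub_cancel] at key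
    have hM : (A.mpow (1-t) * B.mpow t + B.mpow (1-t) * A.mpow t)ᴴ
        = A.mpow t * B.mpow (1 - t) + B.mpow t * A.mpow (1 - t) := by
      simp only [Matrix.conjTranspose_add, Matrix.conjTranspose_mul,
        Frob6.mpow_conjTranspose hA.1, Frob6.mpow_conjTranspose hB.1]
      exact add_comm _ _
    calc Matrix.frob (A.mpow t * B.mpow (1 - t) + B.mpow t * A.mpow (1 - t))
        = Matrix.frob ((A.mpow (1-t) * B.mpow t + B.mpow (1-t) * A.mpow t)ᴴ) := by rw [hM]
      _ = Matrix.frob (A.mpow (1-t) * B.mpow t + B.mpow (1-t) * A.mpow t) :=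
          Frob6.frob_conjTranspose _
      _ ≤ Matrix.frob (A + B) := key
end

section
/- Let A, B be positive semidefinite n×n complex matrices. If Re Tr(A^{1/2} B^{1/2} A^{1/2} B^{1/2}) = Tr(AB), then A and B commute. -/
open Matrix Complex
open scoped ComplexOrder

section
open scoped MatrixOrder
noncomputable def Matrix.PosSemidef.sqrt {n : ℕ} {A : Matrix (Fin n) (Fin n) ℂ} (hA : A.PosSemidef) :
    Matrix (Fin n) (Fin n) ℂ :=
  (hA.1.eigenvectorUnitary : Matrix (Fin n) (Fin n) ℂ) *
    Matrix.diagonal (fun i => ((Real.sqrt (hA.1.eigenvalues i) : ℝ) : ℂ)) *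
    (star (hA.1.eigenvectorUnitary : Matrix (Fin n) (Fin n) ℂ))
lemma Matrix.PosSemidef.sqrt_eq_cfc {n : ℕ} {A : Matrix (Fin n) (Fin n) ℂ} (hA : A.PosSemidef) :
    hA.sqrt = CFC.sqrt A := by
  rw [CFC.sqrt_eq_real_sqrt A hA.nonneg, cfcₙ_eq_cfc, hA.1.cfc_eq, Matrix.IsHermitian.cfc, Matrix.PosSemidef.sqrt]
  simp [Function.comp_def]
lemma Matrix.PosSemidef.sqrt_mul_self {n : ℕ} {A : Matrix (Fin n) (Fin n) ℂ} (hA : A.PosSemidef) :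
    hA.sqrt * hA.sqrt = A := by
  rw [hA.sqrt_eq_cfc]; exact CFC.sqrt_mul_sqrt_self A hA.nonneg
lemma Matrix.PosSemidef.posSemidef_sqrt {n : ℕ} {A : Matrix (Fin n) (Fin n) ℂ} (hA : A.PosSemidef) :
    hA.sqrt.PosSemidef := by
  rw [hA.sqrt_eq_cfc]; exact (CFC.sqrt_nonneg A).posSemidef
end

lemma mpow_half_eq_sqrt {n : ℕ} {A : Matrix (Fin n) (Fin n) ℂ} (hA : A.PosSemidef) :
    A.mpow (1 / 2) = hA.sqrt := by
  rw [Matrix.mpow, dif_pos hA.1, Matrix.PosSemidef.sqrt]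
  congr 2
  ext i j
  simp [Matrix.diagonal_apply, Real.sqrt_eq_rpow, one_div]

lemma trace_self_mul_conjTranspose_eq_zero {n : ℕ} {X : Matrix (Fin n) (Fin n) ℂ}
    (h : (X * Xᴴ).trace.re = 0) : X = 0 := by
  have : ∀ i j, X i j = 0 := by
    have h' : ∑ i, ∑ j, Complex.normSq (X i j) = 0 := by
      rw [← h, Matrix.trace, Complex.re_sum]
      refine Finset.sum_congr rfl fun i _ => ?_
      rw [Matrix.diag, Matrix.mul_apply, Complex.re_sum]
      refine Finset.sum_congr rfl fun j _ => ?_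
      simp [Matrix.conjTranspose_apply, Complex.mul_conj]
    intro i j
    have := (Finset.sum_eq_zero_iff_of_nonneg (fun i _ => Finset.sum_nonneg
      (fun j _ => Complex.normSq_nonneg _))).mp h' i (Finset.mem_univ i)
    have := (Finset.sum_eq_zero_iff_of_nonneg (fun j _ => Complex.normSq_nonneg _)).mp this j
      (Finset.mem_univ j)
    exact Complex.normSq_eq_zero.mp this
  ext i j; exact this i j

theorem stmt8 {n : ℕ} {A B : Matrix (Fin n) (Fin n) ℂ}
    (hA : A.PosSemidef) (hB : B.PosSemidef)
    (h : (A.mpow (1 / 2) * B.mpow (1 / 2) * A.mpow (1 / 2) * B.mpow (1 / 2)).trace.re =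
      (A * B).trace.re) :
    A * B = B * A := by
  rw [mpow_half_eq_sqrt hA, mpow_half_eq_sqrt hB] at h
  set S := hA.sqrt with hSdef
  set T := hB.sqrt with hTdef
  have hSS : S * S = A := hA.sqrt_mul_self
  have hTT : T * T = B := hB.sqrt_mul_self
  have hSh : Sᴴ = S := hA.posSemidef_sqrt.1
  have hTh : Tᴴ = T := hB.posSemidef_sqrt.1
  -- trace identities
  have t1 : (T * S * T * S).trace = (S * T * S * T).trace := by
    rw [show T*S*T*S = T*(S*T*S) by simp only [Matrix.mul_assoc], Matrix.trace_mul_comm]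
  have t2 : (T * S * (S * T)).trace = (A * B).trace := by
    rw [← hSS, ← hTT, show T*S*(S*T) = T*(S*S*T) by simp only [Matrix.mul_assoc],
      Matrix.trace_mul_comm, show S*S*T*T = S*S*(T*T) by simp only [Matrix.mul_assoc]]
  have t3 : (S * T * (T * S)).trace = (A * B).trace := by
    rw [← hSS, ← hTT, show S*T*(T*S) = S*(T*T)*S by simp only [Matrix.mul_assoc],
      Matrix.trace_mul_cycle]
  have expand : (S*T - T*S) * (S*T - T*S)ᴴ
      = S*T*(T*S) - S*T*(S*T) - T*S*(T*S) + T*S*(S*T) := by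
    simp only [Matrix.conjTranspose_sub, Matrix.conjTranspose_mul, hSh, hTh]
    noncomm_ring
  have h0 : ((S*T - T*S) * (S*T - T*S)ᴴ).trace.re = 0 := by
    rw [expand]
    simp only [Matrix.trace_add, Matrix.trace_sub]
    have e1 : (S*T*(S*T)).trace = (S*T*S*T).trace := by simp only [Matrix.mul_assoc]
    have e2 : (T*S*(T*S)).trace = (T*S*T*S).trace := by simp only [Matrix.mul_assoc]
    rw [e1, e2, t1, t2, t3]
    simp only [Complex.add_re, Complex.sub_re]
    rw [h]
    ring
  have hcomm : S * T = T * S := by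
    have := trace_self_mul_conjTranspose_eq_zero h0
    rwa [sub_eq_zero] at this
  have hAT : A * T = T * A := by
    rw [← hSS, Matrix.mul_assoc, hcomm, ← Matrix.mul_assoc, hcomm, Matrix.mul_assoc]
  rw [← hTT, ← Matrix.mul_assoc, hAT, Matrix.mul_assoc, hAT, ← Matrix.mul_assoc]
end

section
/- Let A, B be positive semidefinite n×n complex matrices. If ‖A^{1/4} B^{1/4}‖_4 = (Tr(AB))^{1/4} (Schatten 4-norm), then A and B commute. -/
open Matrix Complex
open scoped ComplexOrder

namespace Matrix
variable {n : ℕ} {A : Matrix (Fin n) (Fin n) ℂ}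

lemma mpow_def (hA : A.IsHermitian) (t : ℝ) :
    A.mpow t = (hA.eigenvectorUnitary : Matrix (Fin n) (Fin n) ℂ) *
      Matrix.diagonal (fun i => ((hA.eigenvalues i ^ t : ℝ) : ℂ)) *
      (star (hA.eigenvectorUnitary : Matrix (Fin n) (Fin n) ℂ)) := dif_pos hA

lemma mpow_posSemidef (hA : A.PosSemidef) (t : ℝ) : (A.mpow t).PosSemidef := by
  rw [mpow_def hA.1, Matrix.star_eq_conjTranspose]
  refine PosSemidef.mul_mul_conjTranspose_same ?_ _
  refine posSemidef_diagonal_iff.mpr fun i => ?_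
  exact_mod_cast Complex.zero_le_real.mpr (Real.rpow_nonneg (hA.eigenvalues_nonneg i) t)

lemma mpow_mul_mpow (hA : A.PosSemidef) {s t : ℝ} (hs : 0 < s) (ht : 0 < t) :
    A.mpow s * A.mpow t = A.mpow (s + t) := by
  rw [mpow_def hA.1, mpow_def hA.1, mpow_def hA.1]
  set U := (hA.1.eigenvectorUnitary : Matrix (Fin n) (Fin n) ℂ) with hUdef
  have hU : star U * U = 1 :=
    Matrix.mem_unitaryGroup_iff'.mp (IsHermitian.eigenvectorUnitary hA.1).2
  have hfun : (fun i => ((hA.1.eigenvalues i ^ s : ℝ) : ℂ) * ((hA.1.eigenvalues i ^ t : ℝ) : ℂ))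
      = fun i => ((hA.1.eigenvalues i ^ (s + t) : ℝ) : ℂ) := by
    funext i
    rw [← Complex.ofReal_mul, ← Real.rpow_add' (hA.eigenvalues_nonneg i) (by positivity)]
  simp only [Matrix.mul_assoc]
  rw [show star U * (U * (Matrix.diagonal (fun i => ((hA.1.eigenvalues i ^ t : ℝ) : ℂ)) * star U))
      = Matrix.diagonal (fun i => ((hA.1.eigenvalues i ^ t : ℝ) : ℂ)) * star U from by
    rw [← Matrix.mul_assoc, hU, Matrix.one_mul],
    ← Matrix.mul_assoc (Matrix.diagonal _) (Matrix.diagonal _) (star U),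
    diagonal_mul_diagonal, hfun]

lemma mpow_one (hA : A.IsHermitian) : A.mpow 1 = A := by
  rw [mpow_def hA]
  conv_rhs => rw [hA.spectral_theorem, Unitary.conjStarAlgAut_apply]
  have hfun : (fun i => ((hA.eigenvalues i ^ (1:ℝ) : ℝ) : ℂ))
      = (RCLike.ofReal ∘ hA.eigenvalues : Fin n → ℂ) := by
    funext i; simp [Real.rpow_one]
  rw [hfun]

lemma trace_sq_eq (hH : A.IsHermitian) :
    (A * A).trace = ((∑ i, hH.eigenvalues i ^ 2 : ℝ) : ℂ) := by
  have hU : star (hH.eigenvectorUnitary : Matrix (Fin n) (Fin n) ℂ) *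
      (hH.eigenvectorUnitary : Matrix (Fin n) (Fin n) ℂ) = 1 :=
    Matrix.mem_unitaryGroup_iff'.mp (IsHermitian.eigenvectorUnitary hH).2
  set U := (hH.eigenvectorUnitary : Matrix (Fin n) (Fin n) ℂ)
  set D := Matrix.diagonal (RCLike.ofReal ∘ hH.eigenvalues : Fin n → ℂ) with hD
  have h1 : A * A = U * (D * D) * star U := by
    conv_lhs => rw [hH.spectral_theorem, Unitary.conjStarAlgAut_apply]
    simp only [Matrix.mul_assoc]
    rw [show star U * (U * (D * star U)) = D * star U from by
      rw [← Matrix.mul_assoc, hU, Matrix.one_mul]]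
  rw [h1, Matrix.trace_mul_cycle, ← Matrix.mul_assoc, hU, Matrix.one_mul]
  rw [hD, Matrix.diagonal_mul_diagonal, Matrix.trace_diagonal]
  push_cast
  simp [pow_two]

end Matrix

theorem stmt9 {n : ℕ} {A B : Matrix (Fin n) (Fin n) ℂ}
    (hA : A.PosSemidef) (hB : B.PosSemidef)
    (h : Matrix.schatten 4 (A.mpow (1 / 4) * B.mpow (1 / 4)) =
      ((A * B).trace.re) ^ (1 / (4 : ℝ))) :
    A * B = B * A := by
  classical
  set P := A.mpow (1 / 4) with hPdef
  set Q := B.mpow (1 / 4) with hQdef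
  set M := A.mpow (1 / 2) with hMdef
  set N := B.mpow (1 / 2) with hNdef
  have hP : P.PosSemidef := Matrix.mpow_posSemidef hA _
  have hQ : Q.PosSemidef := Matrix.mpow_posSemidef hB _
  have hM : M.PosSemidef := Matrix.mpow_posSemidef hA _
  have hN : N.PosSemidef := Matrix.mpow_posSemidef hB _
  have hPP : P * P = M := by
    rw [hPdef, hMdef, Matrix.mpow_mul_mpow hA (by norm_num) (by norm_num)]
    norm_num
  have hQQ : Q * Q = N := by
    rw [hQdef, hNdef, Matrix.mpow_mul_mpow hB (by norm_num) (by norm_num)]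
    norm_num
  have hMM : M * M = A := by
    rw [hMdef, Matrix.mpow_mul_mpow hA (by norm_num) (by norm_num)]
    norm_num [Matrix.mpow_one hA.1]
  have hNN : N * N = B := by
    rw [hNdef, Matrix.mpow_mul_mpow hB (by norm_num) (by norm_num)]
    norm_num [Matrix.mpow_one hB.1]
  set X := P * Q with hXdef
  set Y := M * N with hYdef
  set H := Xᴴ * X with hHdef
  have hH : H.PosSemidef := Matrix.posSemidef_conjTranspose_mul_self X
  -- key : real part of trace of Zᴴ * Z
  have key : ∀ Z : Matrix (Fin n) (Fin n) ℂ,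
      (Zᴴ * Z).trace.re = ∑ j, ∑ i, Complex.normSq (Z i j) := by
    intro Z
    rw [Matrix.trace, Complex.re_sum]
    refine Finset.sum_congr rfl fun j _ => ?_
    rw [Matrix.diag_apply, Matrix.mul_apply, Complex.re_sum]
    refine Finset.sum_congr rfl fun i _ => ?_
    rw [Matrix.conjTranspose_apply]
    simp [Complex.star_def, mul_comm, Complex.mul_conj]
  -- S : the Schatten quantity to the 4th power
  set S := ∑ i, ((Matrix.posSemidef_conjTranspose_mul_self X).1.eigenvalues i) ^ 2 with hSdef
  have hS0 : 0 ≤ S := Finset.sum_nonneg fun i _ => sq_nonneg _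
  have hSch : Matrix.schatten 4 X = S ^ (1 / (4:ℝ)) := by
    unfold Matrix.schatten
    rw [hSdef]
    congr 1
    refine Finset.sum_congr rfl fun i _ => ?_
    rw [show ((4:ℝ)/2) = (2:ℝ) by norm_num, Real.rpow_two]
  -- trace identities
  have hXH : Xᴴ = Q * P := by rw [hXdef, Matrix.conjTranspose_mul, hP.1.eq, hQ.1.eq]
  have hYH : Yᴴ = N * M := by rw [hYdef, Matrix.conjTranspose_mul, hM.1.eq, hN.1.eq]
  have hHQ : H = Q * (M * Q) := by
    rw [hHdef, hXH, hXdef]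
    calc Q * P * (P * Q) = Q * ((P * P) * Q) := by simp only [Matrix.mul_assoc]
      _ = Q * (M * Q) := by rw [hPP]
  have htrHH : (H * H).trace = (Y * Y).trace := by
    have e1 : H * H = Q * ((M * N * M) * Q) := by
      rw [hHQ]
      calc Q * (M * Q) * (Q * (M * Q)) = Q * (M * ((Q * Q) * (M * Q))) := by
            simp only [Matrix.mul_assoc]
        _ = Q * ((M * N * M) * Q) := by rw [hQQ]; simp only [Matrix.mul_assoc]
    rw [e1, Matrix.trace_mul_comm, Matrix.mul_assoc, Matrix.trace_mul_comm, hQQ, hYdef,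
      Matrix.trace_mul_comm]
    simp only [Matrix.mul_assoc]
  have htrAB : (A * B).trace = (Yᴴ * Y).trace := by
    have e2 : Yᴴ * Y = N * (A * N) := by
      rw [hYH, hYdef]
      calc N * M * (M * N) = N * ((M * M) * N) := by simp only [Matrix.mul_assoc]
        _ = N * (A * N) := by rw [hMM]
    rw [e2]
    conv_rhs => rw [Matrix.trace_mul_comm, Matrix.mul_assoc, hNN]
  -- S equals re trace (Y*Y)
  have hSY : S = (Y * Y).trace.re := by
    rw [← htrHH, Matrix.trace_sq_eq hH.1, Complex.ofReal_re, hSdef]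
  set T := (A * B).trace.re with hTdef
  have hTY : T = (Yᴴ * Y).trace.re := by rw [hTdef, htrAB]
  have hT0 : 0 ≤ T := by
    rw [hTY, key Y]
    exact Finset.sum_nonneg fun j _ => Finset.sum_nonneg fun i _ => Complex.normSq_nonneg _
  -- from the hypothesis, S = T
  have hST : S = T := by
    rw [hSch] at h
    have h4 := congrArg (fun x : ℝ => x ^ (4:ℝ)) h
    simpa [← Real.rpow_mul hS0, ← Real.rpow_mul hT0,
      show (1/4:ℝ) * 4 = 1 by norm_num] using h4
  -- K = Yᴴ - Y is zero
  set K := Yᴴ - Y with hKdef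
  have hKtr : (Kᴴ * K).trace.re = 0 := by
    have eK : Kᴴ * K = Y * Yᴴ - Y * Y - Yᴴ * Yᴴ + Yᴴ * Y := by
      rw [hKdef, Matrix.conjTranspose_sub, Matrix.conjTranspose_conjTranspose]
      noncomm_ring
    have hYYH : (Y * Yᴴ).trace = (Yᴴ * Y).trace := Matrix.trace_mul_comm _ _
    have hYHYH : ((Yᴴ * Yᴴ).trace).re = ((Y * Y).trace).re := by
      rw [← Matrix.conjTranspose_mul, Matrix.trace_conjTranspose]
      simp [Complex.star_def]
    rw [eK, Matrix.trace_add, Matrix.trace_sub, Matrix.trace_sub]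
    simp only [Complex.add_re, Complex.sub_re]
    rw [hYHYH]
    have h1 : (Y * Yᴴ).trace.re = T := by rw [hYYH, ← hTY]
    have h2 : (Yᴴ * Y).trace.re = T := by rw [← hTY]
    rw [h1, h2, ← hSY, hST]
    ring
  have hK : K = 0 := by
    rw [key K] at hKtr
    ext i j
    have hj := (Finset.sum_eq_zero_iff_of_nonneg fun j _ =>
      Finset.sum_nonneg fun i _ => Complex.normSq_nonneg (K i j)).mp hKtr j (Finset.mem_univ j)
    have hi := (Finset.sum_eq_zero_iff_of_nonneg fun i _ =>
      Complex.normSq_nonneg (K i j)).mp hj i (Finset.mem_univ i)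
    simpa [Complex.normSq_eq_zero] using hi
  have hcomm : M * N = N * M := by
    have hY : Yᴴ = Y := by rwa [hKdef, sub_eq_zero] at hK
    rw [← hYH, hY, hYdef]
  -- conclude
  have c : Commute M N := hcomm
  have d : Commute (M * M) (N * N) := (c.mul_left c).mul_right (c.mul_left c)
  rw [← hMM, ← hNN]
  exact d
end

section
/- Let A, B be positive semidefinite n×n complex matrices. If X = A^{1/2}B^{1/2} satisfies Tr(X^2) = Tr(X*X) (with real values), then X is Hermitian, i.e. A^{1/2}B^{1/2} = B^{1/2}A^{1/2}. -/
open Matrix Complex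
open scoped ComplexOrder

lemma mpow_isHermitian {n : ℕ} {A : Matrix (Fin n) (Fin n) ℂ} (hA : A.IsHermitian) (t : ℝ) :
    (A.mpow t).IsHermitian := by
  unfold Matrix.mpow
  rw [dif_pos hA]
  have hd : (Matrix.diagonal (fun i => ((hA.eigenvalues i ^ t : ℝ) : ℂ))).IsHermitian := by
    simp [Matrix.IsHermitian, Matrix.diagonal_conjTranspose, Function.comp]
  exact Matrix.isHermitian_mul_mul_conjTranspose _ hd

theorem stmt10 {n : ℕ} {A B : Matrix (Fin n) (Fin n) ℂ}
    (hA : A.PosSemidef) (hB : B.PosSemidef)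
    (h : ((A.mpow (1 / 2) * B.mpow (1 / 2)) * (A.mpow (1 / 2) * B.mpow (1 / 2))).trace =
      ((A.mpow (1 / 2) * B.mpow (1 / 2))ᴴ * (A.mpow (1 / 2) * B.mpow (1 / 2))).trace) :
    (A.mpow (1 / 2) * B.mpow (1 / 2))ᴴ = A.mpow (1 / 2) * B.mpow (1 / 2) ∧
      A.mpow (1 / 2) * B.mpow (1 / 2) = B.mpow (1 / 2) * A.mpow (1 / 2) := by
  set X := A.mpow (1 / 2) * B.mpow (1 / 2) with hX
  have hAp := mpow_isHermitian hA.1 (1 / 2)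
  have hBp := mpow_isHermitian hB.1 (1 / 2)
  have hXH : Xᴴ = B.mpow (1 / 2) * A.mpow (1 / 2) := by
    rw [hX, Matrix.conjTranspose_mul, hAp.eq, hBp.eq]
  -- trace identities
  have h1 : (X * Xᴴ).trace = (Xᴴ * X).trace := Matrix.trace_mul_comm _ _
  have e2 : (Xᴴ * X)ᴴ = Xᴴ * X := by
    rw [Matrix.conjTranspose_mul Xᴴ X, Matrix.conjTranspose_conjTranspose]
  have h2 : (Xᴴ * Xᴴ).trace = (Xᴴ * X).trace := by
    rw [show Xᴴ * Xᴴ = (X * X)ᴴ from (Matrix.conjTranspose_mul X X).symm,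
      Matrix.trace_conjTranspose, h, ← Matrix.trace_conjTranspose, e2]
  have hzero : ((X - Xᴴ)ᴴ * (X - Xᴴ)).trace = 0 := by
    simp only [Matrix.conjTranspose_sub, Matrix.conjTranspose_conjTranspose,
      Matrix.sub_mul, Matrix.mul_sub, Matrix.trace_sub]
    rw [h1, h2, h]
    ring
  have hY : X - Xᴴ = 0 := by
    set Y := X - Xᴴ with hYdef
    have hPS := Matrix.posSemidef_conjTranspose_mul_self Y
    -- trace of PSD matrix is zero implies matrix is zero
    have hkey : ∀ j, 0 ≤ ((Yᴴ * Y) j j).re ∧ (0:ℝ) = ((Yᴴ * Y) j j).im := by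
      intro j
      have h0 := hPS.dotProduct_mulVec_nonneg (Pi.single j 1)
      have heq : dotProduct (star (Pi.single j 1 : Fin n → ℂ)) ((Yᴴ * Y) *ᵥ Pi.single j 1)
          = (Yᴴ * Y) j j := by
        simp [dotProduct, Matrix.mulVec, Pi.single_apply]
      rw [heq] at h0
      exact Complex.le_def.mp h0
    have hdiag : ∀ j, (Yᴴ * Y) j j = 0 := by
      have hsum : ∑ j, ((Yᴴ * Y) j j).re = 0 := by
        have := congrArg Complex.re hzero
        simpa [Matrix.trace, Matrix.diag, Complex.re_sum] using this
      intro j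
      have hre : ((Yᴴ * Y) j j).re = 0 :=
        (Finset.sum_eq_zero_iff_of_nonneg (fun j _ => (hkey j).1)).mp hsum j (Finset.mem_univ j)
      exact Complex.ext hre ((hkey j).2).symm
    -- each row of Y is zero
    have : ∀ j i, Y i j = 0 := by
      intro j i
      have hj := hdiag j
      rw [Matrix.mul_apply] at hj
      have : ∑ k, Complex.normSq (Y k j) = 0 := by
        have := congrArg Complex.re hj
        simpa [Matrix.conjTranspose_apply, Complex.re_sum, Complex.mul_re, Complex.normSq,
          mul_comm] using this
      have := (Finset.sum_eq_zero_iff_of_nonneg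
        (fun k _ => Complex.normSq_nonneg (Y k j))).mp this i (Finset.mem_univ i)
      exact Complex.normSq_eq_zero.mp this
    ext i j
    exact this j i
  have hXeq : Xᴴ = X := by
    have := sub_eq_zero.mp hY
    exact this.symm
  exact ⟨hXeq, by rw [← hXeq, hXH]⟩
end

section
/- Let A, B be positive definite n×n complex matrices and y ∈ ℝ. If A^{1/4+iy} B^{1/4+iy} = B^{1/4+iy} A^{1/4+iy}, then A and B commute. -/
open Matrix Complex
open scoped ComplexOrder

lemma commute_transfer {n : ℕ} (U : Matrix.unitaryGroup (Fin n) ℂ)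
    (d e : Fin n → ℂ) (hde : ∀ i j, d i = d j → e i = e j)
    (X : Matrix (Fin n) (Fin n) ℂ)
    (hX : X * ((U : Matrix (Fin n) (Fin n) ℂ) * Matrix.diagonal d * star (U : Matrix (Fin n) (Fin n) ℂ))
        = ((U : Matrix (Fin n) (Fin n) ℂ) * Matrix.diagonal d * star (U : Matrix (Fin n) (Fin n) ℂ)) * X) :
    X * ((U : Matrix (Fin n) (Fin n) ℂ) * Matrix.diagonal e * star (U : Matrix (Fin n) (Fin n) ℂ))
        = ((U : Matrix (Fin n) (Fin n) ℂ) * Matrix.diagonal e * star (U : Matrix (Fin n) (Fin n) ℂ)) * X := by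
  set Uu : Matrix (Fin n) (Fin n) ℂ := (U : Matrix (Fin n) (Fin n) ℂ) with hUu
  have hU1 : star Uu * Uu = 1 := Matrix.UnitaryGroup.star_mul_self U
  have hU2 : Uu * star Uu = 1 := by simpa using mul_eq_one_comm.mp hU1
  have c1 : ∀ Y : Matrix (Fin n) (Fin n) ℂ, star Uu * (Uu * Y) = Y := fun Y => by
    rw [← Matrix.mul_assoc, hU1, Matrix.one_mul]
  have c2 : ∀ Y : Matrix (Fin n) (Fin n) ℂ, Uu * (star Uu * Y) = Y := fun Y => by
    rw [← Matrix.mul_assoc, hU2, Matrix.one_mul]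
  set M := star Uu * X * Uu with hM
  have hMd : M * Matrix.diagonal d = Matrix.diagonal d * M := by
    have h2 := congrArg (fun Y => star Uu * Y * Uu) hX
    simp only [Matrix.mul_assoc, hU1, hU2, c1, c2, Matrix.mul_one, Matrix.one_mul] at h2
    simp only [hM, Matrix.mul_assoc]
    exact h2
  have hMe : M * Matrix.diagonal e = Matrix.diagonal e * M := by
    ext i j
    have h1 := congrFun (congrFun hMd i) j
    simp only [Matrix.mul_diagonal, Matrix.diagonal_mul] at h1 ⊢
    rcases eq_or_ne (M i j) 0 with h0 | h0
    · simp [h0]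
    · have hd : d j = d i := by
        have hz : (d j - d i) * M i j = 0 := by linear_combination h1
        rcases mul_eq_zero.mp hz with h | h
        · exact sub_eq_zero.mp h
        · exact absurd h h0
      rw [hde j i hd]; ring
  have h3 := congrArg (fun Y => Uu * Y * star Uu) hMe
  simp only [hM, Matrix.mul_assoc, hU1, hU2, c1, c2, Matrix.mul_one, Matrix.one_mul] at h3
  simp only [Matrix.mul_assoc]
  exact h3

lemma key_inj (y : ℝ) {a b : ℝ} (ha : 0 < a) (hb : 0 < b)
    (h : Complex.exp ((1 / 4 + (y : ℂ) * Complex.I) * Real.log a)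
       = Complex.exp ((1 / 4 + (y : ℂ) * Complex.I) * Real.log b)) :
    a = b := by
  rw [Complex.exp_eq_exp_iff_exists_int] at h
  obtain ⟨k, hk⟩ := h
  have hre := congrArg Complex.re hk
  simp [Complex.add_re, Complex.mul_re, Complex.mul_im] at hre
  have : Real.log a = Real.log b := by nlinarith [Real.pi_pos]
  exact Real.log_injOn_pos (Set.mem_Ioi.mpr ha) (Set.mem_Ioi.mpr hb) this

theorem stmt12 {n : ℕ} {A B : Matrix (Fin n) (Fin n) ℂ}
    (hA : A.PosDef) (hB : B.PosDef) (y : ℝ)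
    (h : A.mcpow (1 / 4 + (y : ℂ) * Complex.I) * B.mcpow (1 / 4 + (y : ℂ) * Complex.I) =
      B.mcpow (1 / 4 + (y : ℂ) * Complex.I) * A.mcpow (1 / 4 + (y : ℂ) * Complex.I)) :
    A * B = B * A := by
  set z : ℂ := 1 / 4 + (y : ℂ) * Complex.I with hz
  have hAH := hA.isHermitian
  have hBH := hB.isHermitian
  rw [Matrix.mcpow, Matrix.mcpow, dif_pos hAH, dif_pos hBH] at h
  -- Step 1: B.mcpow z commutes with A
  have step1 :
      ((hBH.eigenvectorUnitary : Matrix (Fin n) (Fin n) ℂ) *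
        Matrix.diagonal (fun i => Complex.exp (z * Real.log (hBH.eigenvalues i))) *
        (star (hBH.eigenvectorUnitary : Matrix (Fin n) (Fin n) ℂ))) * A =
      A * ((hBH.eigenvectorUnitary : Matrix (Fin n) (Fin n) ℂ) *
        Matrix.diagonal (fun i => Complex.exp (z * Real.log (hBH.eigenvalues i))) *
        (star (hBH.eigenvectorUnitary : Matrix (Fin n) (Fin n) ℂ))) := by
    have := commute_transfer hAH.eigenvectorUnitary
      (fun i => Complex.exp (z * Real.log (hAH.eigenvalues i)))
      (fun i => ((hAH.eigenvalues i : ℝ) : ℂ))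
      (fun i j hij => by
        have := key_inj y (hA.eigenvalues_pos i) (hA.eigenvalues_pos j) (by rw [hz] at hij; exact hij)
        exact congrArg (fun r : ℝ => (r : ℂ)) this)
      _ h.symm
    have hspec := hAH.spectral_theorem
    rw [Unitary.conjStarAlgAut_apply] at hspec
    rw [show (Matrix.diagonal fun i => ((hAH.eigenvalues i : ℝ) : ℂ))
        = Matrix.diagonal (RCLike.ofReal ∘ hAH.eigenvalues) from rfl, ← hspec] at this
    exact this
  -- Step 2: A commutes with B
  have step2 := commute_transfer hBH.eigenvectorUnitary
    (fun i => Complex.exp (z * Real.log (hBH.eigenvalues i)))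
    (fun i => ((hBH.eigenvalues i : ℝ) : ℂ))
    (fun i j hij => by
      have := key_inj y (hB.eigenvalues_pos i) (hB.eigenvalues_pos j) (by rw [hz] at hij; exact hij)
      exact congrArg (fun r : ℝ => (r : ℂ)) this)
    A step1.symm
  have hspecB := hBH.spectral_theorem
  rw [Unitary.conjStarAlgAut_apply] at hspecB
  rw [show (Matrix.diagonal fun i => ((hBH.eigenvalues i : ℝ) : ℂ))
      = Matrix.diagonal (RCLike.ofReal ∘ hBH.eigenvalues) from rfl, ← hspecB] at step2
  exact step2
end

section
/- Let A, B be positive semidefinite n×n complex matrices that do not commute. Then for every t ∈ [1/4, 3/4], the strict inequality Re Tr(A^t B^t A^{1-t} B^{1-t}) < Tr(AB) holds, and there exists δ > 0 such that the non-strict inequality Re Tr(A^t B^t A^{1-t} B^{1-t}) ≤ Tr(AB) holds for all t ∈ [1/4 − δ, 3/4 + δ]. -/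
open Matrix Complex
open scoped ComplexOrder

noncomputable def dpow (a : ℝ) (z : ℂ) : ℂ :=
  if 0 < a then Complex.exp (z * Real.log a) else 0

lemma dpow_add (a : ℝ) (z w : ℂ) : dpow a (z + w) = dpow a z * dpow a w := by
  unfold dpow; split_ifs
  · rw [← Complex.exp_add]; ring_nf
  · ring

lemma dpow_conj (a : ℝ) (z : ℂ) :
    (starRingEnd ℂ) (dpow a z) = dpow a ((starRingEnd ℂ) z) := by
  unfold dpow; split_ifs
  · rw [← Complex.exp_conj]; congr 1; simp
  · simp

variable {n : ℕ}

noncomputable def hpow (A : Matrix (Fin n) (Fin n) ℂ) (hA : A.IsHermitian) (z : ℂ) :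
    Matrix (Fin n) (Fin n) ℂ :=
  (hA.eigenvectorUnitary : Matrix (Fin n) (Fin n) ℂ) *
    Matrix.diagonal (fun i => dpow (hA.eigenvalues i) z) *
    (star (hA.eigenvectorUnitary : Matrix (Fin n) (Fin n) ℂ))

lemma hpow_mul {A : Matrix (Fin n) (Fin n) ℂ} (hA : A.IsHermitian) (z w : ℂ) :
    hpow A hA z * hpow A hA w = hpow A hA (z + w) := by
  unfold hpow
  have hU : star (hA.eigenvectorUnitary : Matrix (Fin n) (Fin n) ℂ) *
      (hA.eigenvectorUnitary : Matrix (Fin n) (Fin n) ℂ) = 1 :=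
    (Matrix.mem_unitaryGroup_iff').mp (hA.eigenvectorUnitary).2
  calc _ = (hA.eigenvectorUnitary : Matrix (Fin n) (Fin n) ℂ) *
        Matrix.diagonal (fun i => dpow (hA.eigenvalues i) z) *
        ((star (hA.eigenvectorUnitary : Matrix (Fin n) (Fin n) ℂ) *
          (hA.eigenvectorUnitary : Matrix (Fin n) (Fin n) ℂ)) *
        (Matrix.diagonal (fun i => dpow (hA.eigenvalues i) w) *
          (star (hA.eigenvectorUnitary : Matrix (Fin n) (Fin n) ℂ)))) := by
        simp only [Matrix.mul_assoc]
    _ = _ := by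
        rw [hU, one_mul, ← Matrix.mul_assoc, Matrix.mul_assoc _ _ (Matrix.diagonal _),
          Matrix.diagonal_mul_diagonal]
        have he : (fun i => dpow (hA.eigenvalues i) z * dpow (hA.eigenvalues i) w) =
            fun i => dpow (hA.eigenvalues i) (z + w) := by
          funext i; rw [← dpow_add]
        rw [he]

lemma hpow_conjT {A : Matrix (Fin n) (Fin n) ℂ} (hA : A.IsHermitian) (z : ℂ) :
    (hpow A hA z)ᴴ = hpow A hA ((starRingEnd ℂ) z) := by
  unfold hpow
  rw [Matrix.conjTranspose_mul, Matrix.conjTranspose_mul, Matrix.diagonal_conjTranspose]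
  rw [Matrix.mul_assoc]
  have he : (star fun i => dpow (hA.eigenvalues i) z) =
      fun i => dpow (hA.eigenvalues i) ((starRingEnd ℂ) z) := by
    funext i
    rw [Pi.star_apply, Complex.star_def, dpow_conj]
  rw [he, Matrix.star_eq_conjTranspose, Matrix.conjTranspose_conjTranspose,
    ← Matrix.star_eq_conjTranspose]

lemma dpow_one' (a : ℝ) (ha : 0 ≤ a) : dpow a 1 = (a : ℂ) := by
  unfold dpow; split_ifs with h
  · rw [one_mul, ← Complex.ofReal_exp, Real.exp_log h]
  · have : a = 0 := le_antisymm (not_lt.1 h) ha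
    simp [this]

lemma dpow_real (a : ℝ) (ha : 0 ≤ a) {t : ℝ} (ht : 0 < t) :
    dpow a (t : ℂ) = ((a ^ t : ℝ) : ℂ) := by
  unfold dpow; split_ifs with h
  · rw [Real.rpow_def_of_pos h, ← Complex.ofReal_mul, ← Complex.ofReal_exp]
    norm_cast
    rw [mul_comm]
  · have : a = 0 := le_antisymm (not_lt.1 h) ha
    simp [this, Real.zero_rpow ht.ne']

lemma hpow_one {A : Matrix (Fin n) (Fin n) ℂ} (hA : A.PosSemidef) :
    hpow A hA.1 1 = A := by
  unfold hpow
  have he : (fun i => dpow (hA.1.eigenvalues i) 1) =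
      (RCLike.ofReal ∘ hA.1.eigenvalues : Fin n → ℂ) := by
    funext i
    rw [dpow_one' _ (hA.eigenvalues_nonneg i)]
    rfl
  rw [he]
  exact (Matrix.IsHermitian.spectral_theorem hA.1).symm

lemma hpow_eq_mpow {A : Matrix (Fin n) (Fin n) ℂ} (hA : A.PosSemidef) {t : ℝ} (ht : 0 < t) :
    hpow A hA.1 (t : ℂ) = A.mpow t := by
  unfold hpow Matrix.mpow
  rw [dif_pos hA.1]
  have he : (fun i => dpow (hA.1.eigenvalues i) (t : ℂ)) =
      fun i => ((hA.1.eigenvalues i ^ t : ℝ) : ℂ) := by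
    funext i
    exact dpow_real _ (hA.eigenvalues_nonneg i) ht
  rw [he]

lemma trace_conjT_mul_self_re (M : Matrix (Fin n) (Fin n) ℂ) :
    (Mᴴ * M).trace.re = ∑ j, ∑ i, Complex.normSq (M i j) := by
  rw [Matrix.trace]
  rw [Complex.re_sum]
  congr 1
  funext j
  rw [Matrix.diag_apply, Matrix.mul_apply, Complex.re_sum]
  congr 1
  funext i
  rw [Matrix.conjTranspose_apply]
  have : star (M i j) * M i j = ((Complex.normSq (M i j) : ℝ) : ℂ) := by
    rw [Complex.star_def, mul_comm, Complex.mul_conj]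
  rw [this, Complex.ofReal_re]

lemma trace_conjT_mul_self_nonneg (M : Matrix (Fin n) (Fin n) ℂ) :
    0 ≤ (Mᴴ * M).trace.re := by
  rw [trace_conjT_mul_self_re]
  exact Finset.sum_nonneg fun j _ => Finset.sum_nonneg fun i _ => Complex.normSq_nonneg _

lemma trace_conjT_mul_self_pos (M : Matrix (Fin n) (Fin n) ℂ) (hM : M ≠ 0) :
    0 < (Mᴴ * M).trace.re := by
  rw [trace_conjT_mul_self_re]
  obtain ⟨i, j, hij⟩ : ∃ i j, M i j ≠ 0 := by
    by_contra h
    push_neg at h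
    exact hM (by funext i j; simpa using h i j)
  have h1 : 0 < Complex.normSq (M i j) := Complex.normSq_pos.2 hij
  have h2 : 0 < ∑ i', Complex.normSq (M i' j) :=
    Finset.sum_pos' (fun k _ => Complex.normSq_nonneg _) ⟨i, Finset.mem_univ i, h1⟩
  exact Finset.sum_pos' (fun k _ => Finset.sum_nonneg fun i' _ => Complex.normSq_nonneg _)
    ⟨j, Finset.mem_univ j, h2⟩

/-- half Cauchy-Schwarz -/
lemma two_re_trace_mul_le (X Y : Matrix (Fin n) (Fin n) ℂ) :
    2 * ((X * Y).trace.re) ≤ (X * Xᴴ).trace.re + (Yᴴ * Y).trace.re := by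
  have h0 : 0 ≤ ((Xᴴ - Y)ᴴ * (Xᴴ - Y)).trace.re := trace_conjT_mul_self_nonneg _
  have he : (Xᴴ - Y)ᴴ * (Xᴴ - Y) = X * Xᴴ - X * Y - Yᴴ * Xᴴ + Yᴴ * Y := by
    rw [Matrix.conjTranspose_sub, Matrix.conjTranspose_conjTranspose]
    noncomm_ring
  rw [he, Matrix.trace_add, Matrix.trace_sub, Matrix.trace_sub] at h0
  have hc : (Yᴴ * Xᴴ).trace = star ((X * Y).trace) := by
    rw [← Matrix.conjTranspose_mul, Matrix.trace_conjTranspose]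
  rw [hc] at h0
  simp only [Complex.add_re, Complex.sub_re, Complex.star_def, Complex.conj_re] at h0
  linarith

lemma re_trace_mul_self_eq (S : Matrix (Fin n) (Fin n) ℂ) (hS : Sᴴ = S) :
    (S * S).trace.re = ∑ p : Fin n × Fin n, Complex.normSq (S p.1 p.2) := by
  conv_lhs => rw [show S * S = Sᴴ * S by rw [hS]]
  rw [trace_conjT_mul_self_re, ← Finset.sum_product']
  exact Finset.sum_nbij' (fun p => (p.2, p.1)) (fun p => (p.2, p.1))
    (by simp) (by simp) (by simp) (by simp) (by simp)

/-- Cauchy-Schwarz for Hermitian matrices -/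
lemma re_trace_mul_le_of_hermitian (S T : Matrix (Fin n) (Fin n) ℂ)
    (hS : Sᴴ = S) (hT : Tᴴ = T) :
    (S * T).trace.re ≤
      Real.sqrt ((S * S).trace.re) * Real.sqrt ((T * T).trace.re) := by
  have hst : (S * T).trace.re
      = ∑ p : Fin n × Fin n, (S p.1 p.2 * (starRingEnd ℂ) (T p.1 p.2)).re := by
    have : (S * T).trace = ∑ p : Fin n × Fin n, S p.1 p.2 * (starRingEnd ℂ) (T p.1 p.2) := by
      rw [Matrix.trace, Fintype.sum_prod_type]
      simp only [Matrix.diag_apply, Matrix.mul_apply]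
      congr 1
      funext i
      congr 1
      funext j
      congr 1
      conv_lhs => rw [← hT]
      rw [Matrix.conjTranspose_apply, Complex.star_def]
    rw [this, Complex.re_sum]
  rw [hst]
  have h1 : ∀ p : Fin n × Fin n, (S p.1 p.2 * (starRingEnd ℂ) (T p.1 p.2)).re
      ≤ Real.sqrt (Complex.normSq (S p.1 p.2)) * Real.sqrt (Complex.normSq (T p.1 p.2)) := by
    intro p
    calc (S p.1 p.2 * (starRingEnd ℂ) (T p.1 p.2)).re
        ≤ ‖S p.1 p.2 * (starRingEnd ℂ) (T p.1 p.2)‖ := Complex.re_le_norm _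
      _ = Real.sqrt (Complex.normSq (S p.1 p.2)) * Real.sqrt (Complex.normSq (T p.1 p.2)) := by
          rw [norm_mul, Complex.norm_def, Complex.norm_def, Complex.normSq_conj]
  calc ∑ p : Fin n × Fin n, (S p.1 p.2 * (starRingEnd ℂ) (T p.1 p.2)).re
      ≤ ∑ p : Fin n × Fin n, Real.sqrt (Complex.normSq (S p.1 p.2)) *
          Real.sqrt (Complex.normSq (T p.1 p.2)) := Finset.sum_le_sum fun p _ => h1 p
    _ ≤ Real.sqrt (∑ p : Fin n × Fin n, Complex.normSq (S p.1 p.2)) *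
          Real.sqrt (∑ p : Fin n × Fin n, Complex.normSq (T p.1 p.2)) :=
        Real.sum_sqrt_mul_sqrt_le _ (fun p => Complex.normSq_nonneg _)
          (fun p => Complex.normSq_nonneg _)
    _ = _ := by rw [re_trace_mul_self_eq S hS, re_trace_mul_self_eq T hT]

lemma dpow_differentiable (a : ℝ) : Differentiable ℂ (dpow a) := by
  unfold dpow; split_ifs
  · exact Differentiable.cexp (differentiable_id.mul (differentiable_const _))
  · exact differentiable_const 0

lemma dpow_norm_le (a : ℝ) {z : ℂ} (h0 : 0 ≤ z.re) (h1 : z.re ≤ 1) :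
    ‖dpow a z‖ ≤ Real.exp |Real.log a| := by
  unfold dpow; split_ifs
  · rw [Complex.norm_exp]
    apply Real.exp_le_exp.2
    have : (z * (Real.log a : ℂ)).re = z.re * Real.log a := by simp
    rw [this]
    rcases le_or_gt 0 (Real.log a) with h | h
    · calc z.re * Real.log a ≤ 1 * Real.log a := by nlinarith
        _ ≤ |Real.log a| := by rw [one_mul]; exact le_abs_self _
    · calc z.re * Real.log a ≤ 0 := by nlinarith
        _ ≤ |Real.log a| := abs_nonneg _
  · simp [Real.exp_nonneg]

lemma hpow_apply {A : Matrix (Fin n) (Fin n) ℂ} (hA : A.IsHermitian) (z : ℂ) (i j : Fin n) :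
    hpow A hA z i j = ∑ k, (hA.eigenvectorUnitary : Matrix (Fin n) (Fin n) ℂ) i k *
      dpow (hA.eigenvalues k) z * star ((hA.eigenvectorUnitary : Matrix (Fin n) (Fin n) ℂ) j k) := by
  unfold hpow
  rw [Matrix.mul_apply]
  congr 1
  funext k
  rw [Matrix.mul_diagonal, Matrix.star_apply]

lemma hpow_entry_differentiable {A : Matrix (Fin n) (Fin n) ℂ} (hA : A.IsHermitian) (i j : Fin n) :
    Differentiable ℂ (fun z => hpow A hA z i j) := by
  have : (fun z => hpow A hA z i j) = fun z =>
      ∑ k, (hA.eigenvectorUnitary : Matrix (Fin n) (Fin n) ℂ) i k *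
      dpow (hA.eigenvalues k) z * star ((hA.eigenvectorUnitary : Matrix (Fin n) (Fin n) ℂ) j k) := by
    funext z; exact hpow_apply hA z i j
  rw [this]
  apply Differentiable.fun_sum
  intro k _
  apply Differentiable.mul_const
  apply Differentiable.const_mul
  exact dpow_differentiable _

lemma unitary_entry_norm_le {U : Matrix (Fin n) (Fin n) ℂ}
    (hU : U * star U = 1) (i k : Fin n) : ‖U i k‖ ≤ 1 := by
  have h1 : ∑ l, Complex.normSq (U i l) = 1 := by
    have := congrArg (fun M : Matrix (Fin n) (Fin n) ℂ => (M i i).re) hU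
    simp only [Matrix.mul_apply, Matrix.star_apply] at this
    rw [Complex.re_sum] at this
    have h2 : ∀ l, (U i l * star (U i l)).re = Complex.normSq (U i l) := by
      intro l
      rw [Complex.star_def, Complex.mul_conj, Complex.ofReal_re]
    simp only [h2] at this
    rw [this]
    simp
  have h3 : Complex.normSq (U i k) ≤ 1 := by
    rw [← h1]
    exact Finset.single_le_sum (fun l _ => Complex.normSq_nonneg _) (Finset.mem_univ k)
  have h4 := Complex.sq_norm (U i k)
  nlinarith [norm_nonneg (U i k)]

lemma hpow_entry_norm_le {A : Matrix (Fin n) (Fin n) ℂ} (hA : A.IsHermitian)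
    {z : ℂ} (h0 : 0 ≤ z.re) (h1 : z.re ≤ 1) (i j : Fin n) :
    ‖hpow A hA z i j‖ ≤ ∑ k, Real.exp |Real.log (hA.eigenvalues k)| := by
  rw [hpow_apply]
  calc ‖∑ k, (hA.eigenvectorUnitary : Matrix (Fin n) (Fin n) ℂ) i k *
      dpow (hA.eigenvalues k) z * star ((hA.eigenvectorUnitary : Matrix (Fin n) (Fin n) ℂ) j k)‖
      ≤ ∑ k, ‖(hA.eigenvectorUnitary : Matrix (Fin n) (Fin n) ℂ) i k *
      dpow (hA.eigenvalues k) z * star ((hA.eigenvectorUnitary : Matrix (Fin n) (Fin n) ℂ) j k)‖ :=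
      norm_sum_le _ _
    _ ≤ ∑ k, Real.exp |Real.log (hA.eigenvalues k)| := by
      apply Finset.sum_le_sum
      intro k _
      rw [norm_mul, norm_mul, norm_star]
      have hUn : ((hA.eigenvectorUnitary : Matrix (Fin n) (Fin n) ℂ)) * star ((hA.eigenvectorUnitary : Matrix (Fin n) (Fin n) ℂ)) = 1 :=
        (Matrix.mem_unitaryGroup_iff).mp (hA.eigenvectorUnitary).2
      have e1 := unitary_entry_norm_le hUn i k
      have e2 := unitary_entry_norm_le hUn j k
      have e3 := dpow_norm_le (hA.eigenvalues k) h0 h1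
      have e4 : (0:ℝ) ≤ ‖dpow (hA.eigenvalues k) z‖ := norm_nonneg _
      have e5 : (0:ℝ) ≤ ‖((hA.eigenvectorUnitary : Matrix (Fin n) (Fin n) ℂ)) i k‖ := norm_nonneg _
      have e6 : (0:ℝ) ≤ ‖((hA.eigenvectorUnitary : Matrix (Fin n) (Fin n) ℂ)) j k‖ := norm_nonneg _
      have h5 : ‖((hA.eigenvectorUnitary : Matrix (Fin n) (Fin n) ℂ)) i k‖ *
          ‖dpow (hA.eigenvalues k) z‖ ≤ ‖dpow (hA.eigenvalues k) z‖ := by nlinarith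
      have h6 : ‖((hA.eigenvectorUnitary : Matrix (Fin n) (Fin n) ℂ)) i k‖ *
          ‖dpow (hA.eigenvalues k) z‖ * ‖((hA.eigenvectorUnitary : Matrix (Fin n) (Fin n) ℂ)) j k‖ ≤
          ‖((hA.eigenvectorUnitary : Matrix (Fin n) (Fin n) ℂ)) i k‖ *
          ‖dpow (hA.eigenvalues k) z‖ := by nlinarith [mul_nonneg e5 e4]
      linarith

lemma sum_norm_le_card {m : ℕ} (f : Fin m → ℂ) (K : ℝ) (h : ∀ i, ‖f i‖ ≤ K) :
    ‖∑ i, f i‖ ≤ m * K := by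
  calc ‖∑ i, f i‖ ≤ ∑ i, ‖f i‖ := norm_sum_le _ _
    _ ≤ ∑ _i : Fin m, K := Finset.sum_le_sum fun i _ => h i
    _ = m * K := by rw [Finset.sum_const, Finset.card_univ, Fintype.card_fin, nsmul_eq_mul]

noncomputable def Phi (A B : Matrix (Fin n) (Fin n) ℂ) (hA : A.PosSemidef) (hB : B.PosSemidef)
    (z : ℂ) : ℂ :=
  (hpow A hA.1 z * (hpow B hB.1 z * (hpow A hA.1 (1 - z) * hpow B hB.1 (1 - z)))).trace

lemma Phi_rep (A B : Matrix (Fin n) (Fin n) ℂ) (hA : A.PosSemidef) (hB : B.PosSemidef) :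
    Phi A B hA hB = fun z => ∑ i, ∑ j, ∑ k, ∑ l,
      hpow A hA.1 z i j * (hpow B hB.1 z j k *
        (hpow A hA.1 (1 - z) k l * hpow B hB.1 (1 - z) l i)) := by
  funext z
  unfold Phi
  rw [Matrix.trace]
  simp only [Matrix.diag_apply, Matrix.mul_apply, Finset.mul_sum]

lemma Phi_differentiable (A B : Matrix (Fin n) (Fin n) ℂ) (hA : A.PosSemidef)
    (hB : B.PosSemidef) : Differentiable ℂ (Phi A B hA hB) := by
  rw [Phi_rep]
  have hsub : Differentiable ℂ (fun z : ℂ => 1 - z) :=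
    (differentiable_const 1).sub differentiable_id
  apply Differentiable.fun_sum; intro i _
  apply Differentiable.fun_sum; intro j _
  apply Differentiable.fun_sum; intro k _
  apply Differentiable.fun_sum; intro l _
  exact (hpow_entry_differentiable hA.1 i j).mul
    ((hpow_entry_differentiable hB.1 j k).mul
      (((hpow_entry_differentiable hA.1 k l).comp hsub).mul
        ((hpow_entry_differentiable hB.1 l i).comp hsub)))

lemma Phi_bounded (A B : Matrix (Fin n) (Fin n) ℂ) (hA : A.PosSemidef) (hB : B.PosSemidef) :
    ∃ C : ℝ, ∀ z : ℂ, z.re ∈ Set.Icc (4⁻¹ : ℝ) (3/4) → ‖Phi A B hA hB z‖ ≤ C := by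
  set cA := ∑ k, Real.exp |Real.log (hA.1.eigenvalues k)| with hcA
  set cB := ∑ k, Real.exp |Real.log (hB.1.eigenvalues k)| with hcB
  refine ⟨n * (n * (n * (n * (cA * (cB * (cA * cB)))))), fun z hz => ?_⟩
  have hz0 : 0 ≤ z.re := le_trans (by norm_num) hz.1
  have hz1 : z.re ≤ 1 := le_trans hz.2 (by norm_num)
  have hw0 : 0 ≤ (1 - z).re := by simp [Complex.sub_re]; linarith
  have hw1 : (1 - z).re ≤ 1 := by simp [Complex.sub_re]; linarith
  have hcAnn : 0 ≤ cA := Finset.sum_nonneg fun k _ => (Real.exp_pos _).le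
  have hcBnn : 0 ≤ cB := Finset.sum_nonneg fun k _ => (Real.exp_pos _).le
  rw [Phi_rep]
  apply sum_norm_le_card; intro i
  apply sum_norm_le_card; intro j
  apply sum_norm_le_card; intro k
  apply sum_norm_le_card; intro l
  rw [norm_mul, norm_mul, norm_mul]
  have e1 := hpow_entry_norm_le hA.1 hz0 hz1 i j
  have e2 := hpow_entry_norm_le hB.1 hz0 hz1 j k
  have e3 := hpow_entry_norm_le hA.1 hw0 hw1 k l
  have e4 := hpow_entry_norm_le hB.1 hw0 hw1 l i
  rw [← hcA] at e1 e3
  rw [← hcB] at e2 e4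
  have n1 : (0:ℝ) ≤ ‖hpow A hA.1 z i j‖ := norm_nonneg _
  have n2 : (0:ℝ) ≤ ‖hpow B hB.1 z j k‖ := norm_nonneg _
  have n3 : (0:ℝ) ≤ ‖hpow A hA.1 (1-z) k l‖ := norm_nonneg _
  have n4 : (0:ℝ) ≤ ‖hpow B hB.1 (1-z) l i‖ := norm_nonneg _
  apply mul_le_mul e1 ?_ (by positivity) hcAnn
  apply mul_le_mul e2 ?_ (mul_nonneg n3 n4) hcBnn
  exact mul_le_mul e3 e4 n4 hcAnn

lemma hpow_mul' {A : Matrix (Fin n) (Fin n) ℂ} (hA : A.IsHermitian) (z w : ℂ)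
    (M : Matrix (Fin n) (Fin n) ℂ) :
    hpow A hA z * (hpow A hA w * M) = hpow A hA (z + w) * M := by
  rw [← Matrix.mul_assoc, hpow_mul]

noncomputable def gapM (A B : Matrix (Fin n) (Fin n) ℂ) (hA : A.PosSemidef)
    (hB : B.PosSemidef) : Matrix (Fin n) (Fin n) ℂ :=
  hpow A hA.1 (1/2) * hpow B hB.1 (1/2) - hpow B hB.1 (1/2) * hpow A hA.1 (1/2)

noncomputable def gap (A B : Matrix (Fin n) (Fin n) ℂ) (hA : A.PosSemidef)
    (hB : B.PosSemidef) : ℝ :=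
  (((gapM A B hA hB)ᴴ * gapM A B hA hB).trace).re

lemma gap_pos (A B : Matrix (Fin n) (Fin n) ℂ) (hA : A.PosSemidef) (hB : B.PosSemidef)
    (hAB : A * B ≠ B * A) : 0 < gap A B hA hB := by
  apply trace_conjT_mul_self_pos
  intro h0
  apply hAB
  set aH := hpow A hA.1 (1/2) with haH
  set bH := hpow B hB.1 (1/2) with hbH
  have h0' : aH * bH - bH * aH = 0 := h0
  have hc : aH * bH = bH * aH := sub_eq_zero.mp h0'
  have h2 : A = aH * aH := by rw [haH, hpow_mul]; norm_num; rw [hpow_one hA]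
  have h3 : B = bH * bH := by rw [hbH, hpow_mul]; norm_num; rw [hpow_one hB]
  calc A * B = aH * aH * (bH * bH) := by rw [← h2, ← h3]
    _ = aH * (aH * bH) * bH := by noncomm_ring
    _ = aH * (bH * aH) * bH := by rw [hc]
    _ = (aH * bH) * (aH * bH) := by noncomm_ring
    _ = (bH * aH) * (bH * aH) := by rw [hc]
    _ = bH * (aH * bH) * aH := by noncomm_ring
    _ = bH * (bH * aH) * aH := by rw [hc]
    _ = (bH * bH) * (aH * aH) := by noncomm_ring
    _ = B * A := by rw [← h2, ← h3]

lemma tau_identity (A B : Matrix (Fin n) (Fin n) ℂ) (hA : A.PosSemidef) (hB : B.PosSemidef) :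
    ((hpow A hA.1 (1/2) * (hpow B hB.1 (1/2) * (hpow A hA.1 (1/2) * hpow B hB.1 (1/2)))).trace).re
      = ((A * B).trace).re - gap A B hA hB / 2 := by
  set aH := hpow A hA.1 (1/2) with haH
  set bH := hpow B hB.1 (1/2) with hbH
  have hhalf : (starRingEnd ℂ) (1/2 : ℂ) = 1/2 := by norm_num [Complex.ext_iff]
  have haHH : aHᴴ = aH := by rw [haH, hpow_conjT, hhalf]
  have hbHH : bHᴴ = bH := by rw [hbH, hpow_conjT, hhalf]
  have hA2 : aH * aH = A := by rw [haH, hpow_mul]; norm_num; exact hpow_one hA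
  have hB2 : bH * bH = B := by rw [hbH, hpow_mul]; norm_num; exact hpow_one hB
  set X := aH * bH with hX
  have hXH : Xᴴ = bH * aH := by rw [hX, Matrix.conjTranspose_mul, haHH, hbHH]
  have hgap : gap A B hA hB = ((Xᴴ * X).trace).re + ((X * Xᴴ).trace).re
      - ((X * X).trace).re - ((Xᴴ * Xᴴ).trace).re := by
    unfold gap gapM
    rw [← haH, ← hbH]
    have hg2 : aH * bH - bH * aH = X - Xᴴ := by rw [hXH, hX]
    rw [hg2]
    have he : (X - Xᴴ)ᴴ * (X - Xᴴ) = Xᴴ * X + X * Xᴴ - X * X - Xᴴ * Xᴴ := by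
      rw [Matrix.conjTranspose_sub, Matrix.conjTranspose_conjTranspose]
      noncomm_ring
    rw [he, Matrix.trace_sub, Matrix.trace_sub, Matrix.trace_add]
    simp [Complex.sub_re, Complex.add_re]
  have t1 : ((Xᴴ * X).trace).re = ((A * B).trace).re := by
    have e1 : Xᴴ * X = bH * (aH * aH) * bH := by rw [hXH, hX]; noncomm_ring
    rw [e1, hA2]
    rw [Matrix.trace_mul_comm (bH * A) bH, ← Matrix.mul_assoc, hB2,
      Matrix.trace_mul_comm B A]
  have t2 : ((X * Xᴴ).trace).re = ((A * B).trace).re := by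
    have e1 : X * Xᴴ = aH * (bH * bH) * aH := by rw [hXH, hX]; noncomm_ring
    rw [e1, hB2]
    rw [Matrix.trace_mul_comm (aH * B) aH, ← Matrix.mul_assoc, hA2]
  have t3 : (X * X).trace = (aH * (bH * (aH * bH))).trace := by
    rw [hX]; rw [Matrix.mul_assoc]
  have t4 : ((Xᴴ * Xᴴ).trace).re = ((X * X).trace).re := by
    rw [← Matrix.conjTranspose_mul, Matrix.trace_conjTranspose]
    simp
  rw [← t3]
  rw [hgap, t1, t2, t4]
  ring


lemma keyBound (A B : Matrix (Fin n) (Fin n) ℂ) (hA : A.PosSemidef) (hB : B.PosSemidef)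
    (y : ℝ) :
    (Phi A B hA hB (1/4 + y * Complex.I)).re
      ≤ ((A * B).trace).re - gap A B hA hB / 4 := by
  set z : ℂ := 1/4 + y * Complex.I with hzdef
  set w : ℂ := 1/4 - y * Complex.I with hwdef
  have hcz : (starRingEnd ℂ) z = w := by
    rw [hzdef, hwdef]; simp [Complex.ext_iff]
  have hcw : (starRingEnd ℂ) w = z := by
    rw [hzdef, hwdef]; simp [Complex.ext_iff]
  have hcq : (starRingEnd ℂ) (1/4 : ℂ) = 1/4 := by norm_num [Complex.ext_iff]
  have hch : (starRingEnd ℂ) (1/2 : ℂ) = 1/2 := by norm_num [Complex.ext_iff]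
  have hc3 : (starRingEnd ℂ) (3/4 - z) = 3/4 - w := by
    rw [map_sub, hcz, map_div₀, map_ofNat, map_ofNat]
  have hzw : z + w = 1/2 := by rw [hzdef, hwdef]; ring
  have hwz : w + z = 1/2 := by rw [hzdef, hwdef]; ring
  -- Step A : trace(X*Y) = Phi z
  have sA : ((hpow B hB.1 w * (hpow A hA.1 z * (hpow B hB.1 z * hpow A hA.1 (1/4)))) * (hpow A hA.1 (3/4 - z) * hpow B hB.1 (1/2))).trace
      = (hpow A hA.1 z * (hpow B hB.1 z * (hpow A hA.1 (1 - z) * hpow B hB.1 (1 - z)))).trace := by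
    simp only [Matrix.mul_assoc]
    rw [hpow_mul' hA.1 (1/4) (3/4 - z), show (1/4 : ℂ) + (3/4 - z) = 1 - z by ring]
    rw [Matrix.trace_mul_comm]
    simp only [Matrix.mul_assoc]
    rw [hpow_mul hB.1 (1/2) w, show (1/2 : ℂ) + w = 1 - z by rw [hzdef, hwdef]; ring]
  -- Step B : half Cauchy-Schwarz
  have hCS := two_re_trace_mul_le (hpow B hB.1 w * (hpow A hA.1 z * (hpow B hB.1 z * hpow A hA.1 (1/4)))) (hpow A hA.1 (3/4 - z) * hpow B hB.1 (1/2))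
  -- Step C : trace(Yᴴ*Y) = trace(A*B)
  have sC : (((hpow A hA.1 (3/4 - z) * hpow B hB.1 (1/2))ᴴ) * (hpow A hA.1 (3/4 - z) * hpow B hB.1 (1/2))).trace = ((A : Matrix (Fin n) (Fin n) ℂ) * B).trace := by
    simp only [Matrix.conjTranspose_mul, hpow_conjT hA.1, hpow_conjT hB.1, hc3, hch]
    simp only [Matrix.mul_assoc]
    rw [hpow_mul' hA.1 (3/4 - w) (3/4 - z),
      show (3/4 - w) + (3/4 - z) = (1 : ℂ) by rw [hzdef, hwdef]; ring, hpow_one hA]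
    rw [Matrix.trace_mul_comm]
    simp only [Matrix.mul_assoc]
    rw [hpow_mul hB.1 (1/2) (1/2), show (1/2 : ℂ) + 1/2 = 1 by norm_num, hpow_one hB]
  -- Step D : trace(X*Xᴴ) = trace(S*T)
  have hXH : ((hpow B hB.1 w * (hpow A hA.1 z * (hpow B hB.1 z * hpow A hA.1 (1/4)))))ᴴ = hpow A hA.1 (1/4) * (hpow B hB.1 w * (hpow A hA.1 w * hpow B hB.1 z)) := by
    simp only [Matrix.conjTranspose_mul, Matrix.mul_assoc, hpow_conjT hA.1,
      hpow_conjT hB.1, hcz, hcw, hcq]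
  have sD : ((hpow B hB.1 w * (hpow A hA.1 z * (hpow B hB.1 z * hpow A hA.1 (1/4)))) * ((hpow B hB.1 w * (hpow A hA.1 z * (hpow B hB.1 z * hpow A hA.1 (1/4)))))ᴴ).trace = ((hpow B hB.1 z * (hpow A hA.1 (1/2) * hpow B hB.1 w)) * (hpow A hA.1 w * (hpow B hB.1 (1/2) * hpow A hA.1 z))).trace := by
    rw [hXH]
    simp only [Matrix.mul_assoc]
    rw [hpow_mul' hA.1 (1/4) (1/4), show (1/4 : ℂ) + 1/4 = 1/2 by norm_num]
    rw [Matrix.trace_mul_comm]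
    simp only [Matrix.mul_assoc]
    rw [hpow_mul hB.1 z w, hzw]
    rw [Matrix.trace_mul_comm]
    simp only [Matrix.mul_assoc]
  -- Step E : S, T hermitian
  have hSH : ((hpow B hB.1 z * (hpow A hA.1 (1/2) * hpow B hB.1 w)))ᴴ = hpow B hB.1 z * (hpow A hA.1 (1/2) * hpow B hB.1 w) := by
    simp only [Matrix.conjTranspose_mul, Matrix.mul_assoc, hpow_conjT hA.1,
      hpow_conjT hB.1, hcz, hcw, hch]
  have hTH : ((hpow A hA.1 w * (hpow B hB.1 (1/2) * hpow A hA.1 z)))ᴴ = hpow A hA.1 w * (hpow B hB.1 (1/2) * hpow A hA.1 z) := by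
    simp only [Matrix.conjTranspose_mul, Matrix.mul_assoc, hpow_conjT hA.1,
      hpow_conjT hB.1, hcz, hcw, hch]
  -- Step F : traces of S*S and T*T equal tau
  have sF1 : ((hpow B hB.1 z * (hpow A hA.1 (1/2) * hpow B hB.1 w)) * (hpow B hB.1 z * (hpow A hA.1 (1/2) * hpow B hB.1 w))).trace
      = (hpow A hA.1 (1/2) * (hpow B hB.1 (1/2) * (hpow A hA.1 (1/2) * hpow B hB.1 (1/2)))).trace := by
    simp only [Matrix.mul_assoc]
    rw [hpow_mul' hB.1 w z, hwz]
    rw [Matrix.trace_mul_comm]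
    simp only [Matrix.mul_assoc]
    rw [hpow_mul hB.1 w z, hwz]
  have sF2 : ((hpow A hA.1 w * (hpow B hB.1 (1/2) * hpow A hA.1 z)) * (hpow A hA.1 w * (hpow B hB.1 (1/2) * hpow A hA.1 z))).trace
      = (hpow A hA.1 (1/2) * (hpow B hB.1 (1/2) * (hpow A hA.1 (1/2) * hpow B hB.1 (1/2)))).trace := by
    simp only [Matrix.mul_assoc]
    rw [hpow_mul' hA.1 z w, hzw]
    rw [Matrix.trace_mul_comm]
    simp only [Matrix.mul_assoc]
    rw [hpow_mul hA.1 z w, hzw]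
    rw [Matrix.trace_mul_comm]
    simp only [Matrix.mul_assoc]
  -- Step G : Cauchy-Schwarz for S, T
  have hG := re_trace_mul_le_of_hermitian (hpow B hB.1 z * (hpow A hA.1 (1/2) * hpow B hB.1 w)) (hpow A hA.1 w * (hpow B hB.1 (1/2) * hpow A hA.1 z)) hSH hTH
  have hSSnn : 0 ≤ (( (hpow B hB.1 z * (hpow A hA.1 (1/2) * hpow B hB.1 w)) * (hpow B hB.1 z * (hpow A hA.1 (1/2) * hpow B hB.1 w))).trace).re := by
    rw [re_trace_mul_self_eq (hpow B hB.1 z * (hpow A hA.1 (1/2) * hpow B hB.1 w)) hSH]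
    exact Finset.sum_nonneg fun p _ => Complex.normSq_nonneg _
  have htau : ((hpow B hB.1 z * (hpow A hA.1 (1/2) * hpow B hB.1 w)) * (hpow A hA.1 w * (hpow B hB.1 (1/2) * hpow A hA.1 z))).trace.re
      ≤ ((hpow A hA.1 (1/2) * (hpow B hB.1 (1/2) * (hpow A hA.1 (1/2) * hpow B hB.1 (1/2)))).trace).re := by
    calc ((hpow B hB.1 z * (hpow A hA.1 (1/2) * hpow B hB.1 w)) * (hpow A hA.1 w * (hpow B hB.1 (1/2) * hpow A hA.1 z))).trace.re
        ≤ Real.sqrt ((( (hpow B hB.1 z * (hpow A hA.1 (1/2) * hpow B hB.1 w)) * (hpow B hB.1 z * (hpow A hA.1 (1/2) * hpow B hB.1 w))).trace).re) * Real.sqrt ((( (hpow A hA.1 w * (hpow B hB.1 (1/2) * hpow A hA.1 z)) * (hpow A hA.1 w * (hpow B hB.1 (1/2) * hpow A hA.1 z))).trace).re) := hG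
      _ = ((hpow A hA.1 (1/2) * (hpow B hB.1 (1/2) * (hpow A hA.1 (1/2) * hpow B hB.1 (1/2)))).trace).re := by
          rw [sF1, sF2, Real.mul_self_sqrt]
          rw [← sF1]
          exact hSSnn
  -- Step H : tau identity
  have hH := tau_identity A B hA hB
  -- assemble
  have hPhi : (Phi A B hA hB z).re = (((hpow B hB.1 w * (hpow A hA.1 z * (hpow B hB.1 z * hpow A hA.1 (1/4)))) * (hpow A hA.1 (3/4 - z) * hpow B hB.1 (1/2))).trace).re := by
    unfold Phi
    rw [sA]
  rw [hPhi]
  rw [sC] at hCS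
  rw [sD] at hCS
  have := htau
  rw [hH] at this
  linarith

lemma Phi_symm (A B : Matrix (Fin n) (Fin n) ℂ) (hA : A.PosSemidef) (hB : B.PosSemidef)
    (z : ℂ) : Phi A B hA hB (1 - z) = Phi A B hA hB z := by
  unfold Phi
  rw [sub_sub_cancel]
  rw [Matrix.trace_mul_comm]
  simp only [Matrix.mul_assoc]
  rw [Matrix.trace_mul_comm]
  simp only [Matrix.mul_assoc]

lemma PL_bound (A B : Matrix (Fin n) (Fin n) ℂ) (hA : A.PosSemidef) (hB : B.PosSemidef) :
    ∀ z : ℂ, 4⁻¹ ≤ z.re → z.re ≤ 3/4 →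
      (Phi A B hA hB z).re ≤ ((A * B).trace).re - gap A B hA hB / 4 := by
  intro z hz1 hz2
  obtain ⟨C₀, hC₀⟩ := Phi_bounded A B hA hB
  set C : ℝ := Real.exp (((A * B).trace).re - gap A B hA hB / 4) with hC
  have key : ‖Complex.exp (Phi A B hA hB z)‖ ≤ C := by
    apply PhragmenLindelof.vertical_strip
      (f := fun z => Complex.exp (Phi A B hA hB z)) (a := (4⁻¹ : ℝ)) (b := (3/4 : ℝ))
    · exact ((Phi_differentiable A B hA hB).cexp).diffContOnCl
    · refine ⟨0, by positivity, C₀, ?_⟩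
      rw [Asymptotics.isBigO_iff]
      refine ⟨1, ?_⟩
      rw [Filter.eventually_inf_principal]
      apply Filter.Eventually.of_forall
      intro x hx
      have hx' : x.re ∈ Set.Icc (4⁻¹ : ℝ) (3/4) := ⟨le_of_lt hx.1, le_of_lt hx.2⟩
      have h1 : ‖Complex.exp (Phi A B hA hB x)‖ = Real.exp ((Phi A B hA hB x).re) := by
        rw [Complex.norm_exp]
      have h2 : (Phi A B hA hB x).re ≤ C₀ :=
        le_trans (Complex.re_le_norm _) (hC₀ x hx')
      rw [h1]
      simp only [zero_mul, Real.exp_zero, mul_one, one_mul]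
      rw [Real.norm_eq_abs, Real.abs_exp]
      exact Real.exp_le_exp.2 h2
    · intro x hx
      have hxe : x = 1/4 + x.im * Complex.I := by
        apply Complex.ext
        · simp [hx]
        · simp
      have h1 : ‖Complex.exp (Phi A B hA hB x)‖ = Real.exp ((Phi A B hA hB x).re) := by
        rw [Complex.norm_exp]
      rw [h1, hC]
      apply Real.exp_le_exp.2
      rw [hxe]
      exact keyBound A B hA hB x.im
    · intro x hx
      have h1 : ‖Complex.exp (Phi A B hA hB x)‖ = Real.exp ((Phi A B hA hB x).re) := by
        rw [Complex.norm_exp]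
      have hxe : 1 - x = 1/4 + (↑(-x.im) : ℂ) * Complex.I := by
        apply Complex.ext
        · simp [hx]; norm_num
        · simp
      rw [h1, hC]
      apply Real.exp_le_exp.2
      rw [← Phi_symm A B hA hB x, hxe]
      exact keyBound A B hA hB (-x.im)
    · exact hz1
    · exact hz2
  have h1 : ‖Complex.exp (Phi A B hA hB z)‖ = Real.exp ((Phi A B hA hB z).re) := by
    rw [Complex.norm_exp]
  rw [h1, hC] at key
  exact Real.exp_le_exp.1 key

theorem stmt16_aux {n : ℕ} {A B : Matrix (Fin n) (Fin n) ℂ}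
    (hA : A.PosSemidef) (hB : B.PosSemidef) (hAB : A * B ≠ B * A) :
    (∀ t : ℝ, 1 / 4 ≤ t → t ≤ 3 / 4 →
      (A.mpow t * B.mpow t * A.mpow (1 - t) * B.mpow (1 - t)).trace.re <
        (A * B).trace.re) ∧
    ∃ δ : ℝ, 0 < δ ∧ ∀ t : ℝ, 1 / 4 - δ ≤ t → t ≤ 3 / 4 + δ →
      (A.mpow t * B.mpow t * A.mpow (1 - t) * B.mpow (1 - t)).trace.re ≤
        (A * B).trace.re := by
  have hgap := gap_pos A B hA hB hAB
  -- identification of the trace expression with Phi at real points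
  have hid : ∀ t : ℝ, 0 < t → t < 1 →
      (A.mpow t * B.mpow t * A.mpow (1 - t) * B.mpow (1 - t)).trace.re
        = (Phi A B hA hB (t : ℂ)).re := by
    intro t ht0 ht1
    have h1t : (0:ℝ) < 1 - t := by linarith
    have e1 : A.mpow t = hpow A hA.1 (t : ℂ) := (hpow_eq_mpow hA ht0).symm
    have e2 : B.mpow t = hpow B hB.1 (t : ℂ) := (hpow_eq_mpow hB ht0).symm
    have harg : ((1 - t : ℝ) : ℂ) = 1 - (t : ℂ) := by push_cast; ring
    have e3 : A.mpow (1 - t) = hpow A hA.1 (1 - (t:ℂ)) := by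
      rw [← hpow_eq_mpow hA h1t, harg]
    have e4 : B.mpow (1 - t) = hpow B hB.1 (1 - (t:ℂ)) := by
      rw [← hpow_eq_mpow hB h1t, harg]
    rw [e1, e2, e3, e4]
    unfold Phi
    simp only [Matrix.mul_assoc]
  have hre : ∀ t : ℝ, ((t : ℂ)).re = t := fun t => by simp
  -- the uniform strict bound on [1/4, 3/4]
  have hmain : ∀ t : ℝ, 1/4 ≤ t → t ≤ 3/4 →
      (Phi A B hA hB (t : ℂ)).re ≤ ((A * B).trace).re - gap A B hA hB / 4 := by
    intro t h1 h2
    apply PL_bound A B hA hB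
    · rw [hre]; norm_num; exact h1
    · rw [hre]; exact h2
  constructor
  · intro t h1 h2
    rw [hid t (by linarith) (by linarith)]
    have := hmain t h1 h2
    linarith
  · -- continuity of Re Phi on the reals
    have hcont : Continuous (fun t : ℝ => (Phi A B hA hB (t : ℂ)).re) :=
      Complex.continuous_re.comp
        ((Phi_differentiable A B hA hB).continuous.comp Complex.continuous_ofReal)
    set h : ℝ → ℝ := fun t => (Phi A B hA hB (t : ℂ)).re with hh
    set ε : ℝ := gap A B hA hB / 4 with hε
    have hεpos : 0 < ε := by positivity
    have hc1 : ContinuousAt h (1/4) := hcont.continuousAt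
    have hc2 : ContinuousAt h (3/4) := hcont.continuousAt
    rw [Metric.continuousAt_iff] at hc1 hc2
    obtain ⟨δ₁, hδ₁pos, hδ₁⟩ := hc1 ε hεpos
    obtain ⟨δ₂, hδ₂pos, hδ₂⟩ := hc2 ε hεpos
    have hm8 : min (min δ₁ δ₂) (1/8) ≤ 1/8 := min_le_right _ _
    have hm1 : min (min δ₁ δ₂) (1/8) ≤ δ₁ := le_trans (min_le_left _ _) (min_le_left _ _)
    have hm2 : min (min δ₁ δ₂) (1/8) ≤ δ₂ := le_trans (min_le_left _ _) (min_le_right _ _)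
    have hmpos : 0 < min (min δ₁ δ₂) (1/8) := by positivity
    refine ⟨min (min δ₁ δ₂) (1/8) / 2, by positivity, ?_⟩
    intro t ht1 ht2
    set δ := min (min δ₁ δ₂) (1/8) / 2 with hδ
    have hδ8 : δ ≤ 1/8 := by rw [hδ]; linarith
    have hδ1 : δ < δ₁ := by rw [hδ]; linarith
    have hδ2 : δ < δ₂ := by rw [hδ]; linarith
    have ht0 : 0 < t := by linarith
    have ht1' : t < 1 := by linarith
    rw [hid t ht0 ht1']
    rcases lt_or_ge t (1/4) with hlt | hge
    · have hdist : dist t (1/4) < δ₁ := by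
        rw [Real.dist_eq, abs_lt]
        constructor <;> linarith
      have := hδ₁ hdist
      rw [Real.dist_eq, abs_lt] at this
      have hb := hmain (1/4) (le_refl _) (by norm_num)
      have : h t < h (1/4) + ε := by linarith [this.2]
      have hh4 : h (1/4) ≤ ((A * B).trace).re - ε := hb
      linarith
    rcases le_or_gt t (3/4) with hle | hgt
    · have := hmain t hge hle
      linarith
    · have hdist : dist t (3/4) < δ₂ := by
        rw [Real.dist_eq, abs_lt]
        constructor <;> linarith
      have := hδ₂ hdist
      rw [Real.dist_eq, abs_lt] at this
      have hb := hmain (3/4) (by norm_num) (le_refl _)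
      have : h t < h (3/4) + ε := by linarith [this.2]
      have hh4 : h (3/4) ≤ ((A * B).trace).re - ε := hb
      linarith

theorem stmt16 {n : ℕ} {A B : Matrix (Fin n) (Fin n) ℂ}
    (hA : A.PosSemidef) (hB : B.PosSemidef) (hAB : A * B ≠ B * A) :
    (∀ t : ℝ, 1 / 4 ≤ t → t ≤ 3 / 4 →
      (A.mpow t * B.mpow t * A.mpow (1 - t) * B.mpow (1 - t)).trace.re <
        (A * B).trace.re) ∧
    ∃ δ : ℝ, 0 < δ ∧ ∀ t : ℝ, 1 / 4 - δ ≤ t → t ≤ 3 / 4 + δ →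
      (A.mpow t * B.mpow t * A.mpow (1 - t) * B.mpow (1 - t)).trace.re ≤
        (A * B).trace.re := by
  exact stmt16_aux hA hB hAB
end
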